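/- arXiv:1601.07743 — 3 statements merged into one kernel-verified Lean document; each statement's English description precedes it below -/
import Mathlib

section
/- For every λ ≥ 0, n ∈ ℕ₀ and x ∈ [−1,1], I^λ_− C_n^{λ+1/2}(x) = c_{n,λ} (1−x) · ₂F₁(−n, n+2λ+1; λ+3/2; (1−x)/2), where c_{n,λ} = (√π (2λ+1)_n / n!) · Γ(λ+1)/Γ(λ+3/2). -/
open Real MeasureTheory Finset intervalIntegral

noncomputable section

/-- The Gegenbauer (ultraspherical) polynomial `C_n^λ`. -/
def Gegenbauer (lam : ℝ) (n : ℕ) (x : ℝ) : ℝ :=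
  ∑ k ∈ Finset.range (n / 2 + 1),
    ((-1 : ℝ) ^ k * Real.Gamma ((n : ℝ) - (k : ℝ) + lam) /
      (Real.Gamma lam * (Nat.factorial k : ℝ) * (Nat.factorial (n - 2 * k) : ℝ))) *
      (2 * x) ^ (n - 2 * k)

/-- The terminating hypergeometric polynomial `₂F₁(−m, b; c; z)`. -/
def hyp2F1 (m : ℕ) (b c z : ℝ) : ℝ :=
  ∑ k ∈ Finset.range (m + 1),
    ((ascPochhammer ℝ k).eval (-(m : ℝ)) * (ascPochhammer ℝ k).eval b) /
      ((ascPochhammer ℝ k).eval c * (Nat.factorial k : ℝ)) * z ^ k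

/-- The half-step fractional integral `I^λ_+`. -/
def Iplus (lam : ℝ) (f : ℝ → ℝ) (x : ℝ) : ℝ :=
  (1 + x) ^ (-lam + 1 / 2) *
    ∫ τ in (-1 : ℝ)..x, (x - τ) ^ (-(1 / 2) : ℝ) * (1 + τ) ^ lam * f τ

/-- The half-step fractional integral `I^λ_−`. -/
def Iminus (lam : ℝ) (f : ℝ → ℝ) (x : ℝ) : ℝ :=
  (1 - x) ^ (-lam + 1 / 2) *
    ∫ τ in x..(1 : ℝ), (τ - x) ^ (-(1 / 2) : ℝ) * (1 - τ) ^ lam * f τ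

/-- `𝓘^λ_+ = I^λ_+ + I^λ_−`. -/
def calIplus (lam : ℝ) (f : ℝ → ℝ) (x : ℝ) : ℝ := Iplus lam f x + Iminus lam f x

/-- `𝓘^λ_− = I^λ_+ − I^λ_−`. -/
def calIminus (lam : ℝ) (f : ℝ → ℝ) (x : ℝ) : ℝ := Iplus lam f x - Iminus lam f x

/-- The half-step fractional derivative `D^λ_+`. -/
def Dplus (lam : ℝ) (f : ℝ → ℝ) (x : ℝ) : ℝ :=
  (1 + x) *
    deriv (fun y : ℝ => (1 + y) ^ (-lam) *
      ∫ τ in (-1 : ℝ)..y, (y - τ) ^ (-(1 / 2) : ℝ) * (1 + τ) ^ (lam - 1 / 2) * f τ) x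

/-- The half-step fractional derivative `D^λ_−`. -/
def Dminus (lam : ℝ) (f : ℝ → ℝ) (x : ℝ) : ℝ :=
  (1 - x) *
    deriv (fun y : ℝ => (1 - y) ^ (-lam) *
      ∫ τ in y..(1 : ℝ), (τ - y) ^ (-(1 / 2) : ℝ) * (1 - τ) ^ (lam - 1 / 2) * f τ) x

/-- `𝓓^λ_+ = D^λ_+ + D^λ_−`. -/
def calDplus (lam : ℝ) (f : ℝ → ℝ) (x : ℝ) : ℝ := Dplus lam f x + Dminus lam f x

/-- `𝓓^λ_− = D^λ_+ − D^λ_−`. -/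
def calDminus (lam : ℝ) (f : ℝ → ℝ) (x : ℝ) : ℝ := Dplus lam f x - Dminus lam f x

/-- Normalization constant `h_n^λ` for the Gegenbauer system. -/
def hGeg (lam : ℝ) (n : ℕ) : ℝ :=
  Real.pi * Real.Gamma (2 * lam + n) /
    ((2 : ℝ) ^ (2 * lam - 1) * (Nat.factorial n : ℝ) * (lam + n) * (Real.Gamma lam) ^ 2)

/-- The `n`-th Gegenbauer coefficient (parameter `λ`) of `g`. -/
def gegCoeff (lam : ℝ) (g : ℝ → ℝ) (n : ℕ) : ℝ :=
  (1 / hGeg lam n) *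
    ∫ t in (-1 : ℝ)..1, g t * Gegenbauer lam n t * (1 - t ^ 2) ^ (lam - 1 / 2)

/-- The Chebyshev polynomial of the first kind, as a real function. -/
def chebT (n : ℕ) (x : ℝ) : ℝ := (Polynomial.Chebyshev.T ℝ (n : ℤ)).eval x

/-- The `n`-th Chebyshev coefficient of `f`. -/
def chebCoeff (f : ℝ → ℝ) (n : ℕ) : ℝ :=
  if n = 0 then
    (1 / Real.pi) * ∫ t in (-1 : ℝ)..1, f t * (1 - t ^ 2) ^ (-(1 / 2) : ℝ)
  else
    (2 / Real.pi) * ∫ t in (-1 : ℝ)..1, f t * chebT n t * (1 - t ^ 2) ^ (-(1 / 2) : ℝ)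

/-- The Legendre polynomial `P_n = C_n^{1/2}`. -/
def legendreP (n : ℕ) (x : ℝ) : ℝ := Gegenbauer (1 / 2) n x

/-- The `n`-th Legendre coefficient of `g`. -/
def legCoeff (g : ℝ → ℝ) (n : ℕ) : ℝ :=
  ((2 * (n : ℝ) + 1) / 2) * ∫ x in (-1 : ℝ)..1, g x * legendreP n x

/-- `f` is (zonal) positive definite on the sphere `S^m ⊂ ℝ^{m+1}`. -/
def PosDefSphere (m : ℕ) (f : ℝ → ℝ) : Prop :=
  ∀ (n : ℕ) (x : Fin n → EuclideanSpace ℝ (Fin (m + 1))),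
    (∀ i, ‖x i‖ = 1) → Function.Injective x →
      ∀ c : Fin n → ℝ,
        0 ≤ ∑ i : Fin n, ∑ j : Fin n, c i * c j * f (inner ℝ (x i) (x j) : ℝ)

/-- `f` is (zonal) strictly positive definite on the sphere `S^m ⊂ ℝ^{m+1}`. -/
def StrictPosDefSphere (m : ℕ) (f : ℝ → ℝ) : Prop :=
  ∀ (n : ℕ) (x : Fin n → EuclideanSpace ℝ (Fin (m + 1))),
    (∀ i, ‖x i‖ = 1) → Function.Injective x →
      ∀ c : Fin n → ℝ, c ≠ 0 →
        0 < ∑ i : Fin n, ∑ j : Fin n, c i * c j * f (inner ℝ (x i) (x j) : ℝ)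

/-- `f ∈ Λ_m`: continuous on `[−1,1]` and positive definite on `S^m`. -/
def MemLambda (m : ℕ) (f : ℝ → ℝ) : Prop :=
  ContinuousOn f (Set.Icc (-1 : ℝ) 1) ∧ PosDefSphere m f

/-- `f ∈ Λ^+_m`: continuous on `[−1,1]` and strictly positive definite on `S^m`. -/
def MemLambdaPlus (m : ℕ) (f : ℝ → ℝ) : Prop :=
  ContinuousOn f (Set.Icc (-1 : ℝ) 1) ∧ StrictPosDefSphere m f

end


noncomputable section AuxStmt15


open Real Finset

namespace Stmt15aux

noncomputable def P (x : ℝ) (j : ℕ) : ℝ := (Polynomial.eval x (ascPochhammer ℝ j))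

lemma P_zero (x : ℝ) : P x 0 = 1 := by simp [P]

lemma P_succ (x : ℝ) (j : ℕ) : P x (j+1) = P x j * (x + j) := by
  simp [P, ascPochhammer_succ_eval]

noncomputable def F (μ : ℝ) (n m : ℕ) : ℝ :=
  ∑ k ∈ Finset.range (m/2+1),
    (-1:ℝ)^k * P μ (n-k) * 2^(n-2*k) / ((Nat.factorial k : ℝ) * (Nat.factorial (m-2*k) : ℝ))

lemma recA (μ : ℝ) (n m : ℕ) (h : m + 1 ≤ n) :
    F μ (n+2) (m+2) = 2*(μ+(n:ℝ)+1) * F μ (n+1) (m+2) + F μ n m := by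
  have hr : (m+2)/2 + 1 = (m/2 + 1) + 1 := by omega
  have main : ∀ k ∈ Finset.range (m/2+1+1),
      (-1:ℝ)^k * P μ (n+2-k) * 2^(n+2-2*k) /
          ((Nat.factorial k : ℝ) * (Nat.factorial (m+2-2*k) : ℝ))
      = (2*(μ+(n:ℝ)+1) * ((-1:ℝ)^k * P μ (n+1-k) * 2^(n+1-2*k) /
          ((Nat.factorial k : ℝ) * (Nat.factorial (m+2-2*k) : ℝ)))
        + ((-1:ℝ)^k * P μ (n+1-k) * 2^(n+2-2*k) /
          ((Nat.factorial k : ℝ) * (Nat.factorial (m+2-2*k) : ℝ))) * (-(k:ℝ))) := by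
    intro k hk
    simp only [Finset.mem_range] at hk
    have hk2 : 2*k ≤ m + 2 := by omega
    have h1 : n+2-k = (n+1-k)+1 := by omega
    have h2 : n+2-2*k = (n+1-2*k)+1 := by omega
    have hc : ((n+1-k:ℕ):ℝ) = (n:ℝ)+1-k := by
      rw [Nat.cast_sub (by omega : k ≤ n+1)]; push_cast; ring
    rw [h1, P_succ, h2, pow_succ, hc]
    have hfk : ((Nat.factorial k : ℝ)) ≠ 0 := by positivity
    have hfm : ((Nat.factorial (m+2-2*k) : ℝ)) ≠ 0 := by positivity
    field_simp
    ring
  conv_lhs => rw [F, hr]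
  rw [Finset.sum_congr rfl main, Finset.sum_add_distrib]
  congr 1
  · rw [← Finset.mul_sum, F, hr]
  · rw [Finset.sum_range_succ']
    have h0 : ((-1:ℝ)^0 * P μ (n+1-0) * 2^(n+2-2*0) /
        ((Nat.factorial 0 : ℝ) * (Nat.factorial (m+2-2*0) : ℝ))) * (-((0:ℕ):ℝ)) = 0 := by
      simp
    rw [h0, add_zero, F]
    apply Finset.sum_congr rfl
    intro k hk
    have e1 : n+1-(k+1) = n-k := by omega
    have e2 : n+2-2*(k+1) = n-2*k := by omega
    have e3 : m+2-2*(k+1) = m-2*k := by omega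
    rw [e1, e2, e3, pow_succ, Nat.factorial_succ]
    have hfk : ((Nat.factorial k : ℝ)) ≠ 0 := by positivity
    have hfm : ((Nat.factorial (m-2*k) : ℝ)) ≠ 0 := by positivity
    have hk1 : ((k:ℝ)+1) ≠ 0 := by positivity
    push_cast
    field_simp

lemma recB (μ : ℝ) (m : ℕ) :
    ((m:ℝ)+2) * F μ (m+2) (m+2) = 2*(μ+(m:ℝ)+1) * F μ (m+1) (m+1) - (2*μ+(m:ℝ)) * F μ m m := by
  have hr : (m+2)/2 + 1 = (m/2 + 1) + 1 := by omega
  have main : ∀ k ∈ Finset.range (m/2+1+1),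
      ((m:ℝ)+2) * ((-1:ℝ)^k * P μ (m+2-k) * 2^(m+2-2*k) /
          ((Nat.factorial k : ℝ) * (Nat.factorial (m+2-2*k) : ℝ)))
      = ((μ+(m:ℝ)+1) * (((m+2-2*k : ℕ):ℝ) * ((-1:ℝ)^k * P μ (m+1-k) * 2^(m+2-2*k) /
          ((Nat.factorial k : ℝ) * (Nat.factorial (m+2-2*k) : ℝ))))
        + (2*μ+(m:ℝ)) * (((-1:ℝ)^k * P μ (m+1-k) * 2^(m+2-2*k) /
          ((Nat.factorial k : ℝ) * (Nat.factorial (m+2-2*k) : ℝ))) * ((k:ℝ)))) := by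
    intro k hk
    simp only [Finset.mem_range] at hk
    have hk2 : 2*k ≤ m + 2 := by omega
    have h1 : m+2-k = (m+1-k)+1 := by omega
    have hc : ((m+1-k:ℕ):ℝ) = (m:ℝ)+1-k := by
      rw [Nat.cast_sub (by omega : k ≤ m+1)]; push_cast; ring
    have hcc : ((m+2-2*k:ℕ):ℝ) = (m:ℝ)+2-2*k := by
      rw [Nat.cast_sub (by omega : 2*k ≤ m+2)]; push_cast; ring
    rw [h1, P_succ, hc, hcc]
    have hfk : ((Nat.factorial k : ℝ)) ≠ 0 := by positivity
    have hfm : ((Nat.factorial (m+2-2*k) : ℝ)) ≠ 0 := by positivity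
    field_simp
    ring
  have partB : ∑ k ∈ Finset.range (m/2+1+1),
      (2*μ+(m:ℝ)) * (((-1:ℝ)^k * P μ (m+1-k) * 2^(m+2-2*k) /
          ((Nat.factorial k : ℝ) * (Nat.factorial (m+2-2*k) : ℝ))) * ((k:ℝ)))
      = - ((2*μ+(m:ℝ)) * F μ m m) := by
    rw [F, Finset.mul_sum, ← Finset.sum_neg_distrib, Finset.sum_range_succ']
    have h0 : (2*μ+(m:ℝ)) * (((-1:ℝ)^0 * P μ (m+1-0) * 2^(m+2-2*0) /
        ((Nat.factorial 0 : ℝ) * (Nat.factorial (m+2-2*0) : ℝ))) * (((0:ℕ)):ℝ)) = 0 := by simp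
    rw [h0, add_zero]
    apply Finset.sum_congr rfl
    intro k hk
    have e1 : m+1-(k+1) = m-k := by omega
    have e2 : m+2-2*(k+1) = m-2*k := by omega
    rw [e1, e2, pow_succ, Nat.factorial_succ]
    have hfk : ((Nat.factorial k : ℝ)) ≠ 0 := by positivity
    have hfm : ((Nat.factorial (m-2*k) : ℝ)) ≠ 0 := by positivity
    have hk1 : ((k:ℝ)+1) ≠ 0 := by positivity
    push_cast
    field_simp
  have partA : ∑ k ∈ Finset.range (m/2+1+1),
      (μ+(m:ℝ)+1) * (((m+2-2*k : ℕ):ℝ) * ((-1:ℝ)^k * P μ (m+1-k) * 2^(m+2-2*k) /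
          ((Nat.factorial k : ℝ) * (Nat.factorial (m+2-2*k) : ℝ))))
      = 2*(μ+(m:ℝ)+1) * F μ (m+1) (m+1) := by
    rw [F, Finset.mul_sum]
    rw [← Finset.sum_subset (Finset.range_subset_range.2 (by omega : (m+1)/2+1 ≤ m/2+1+1))]
    · apply Finset.sum_congr rfl
      intro k hk
      simp only [Finset.mem_range] at hk
      have hk2 : 2*k ≤ m+1 := by omega
      have e1 : m+2-2*k = (m+1-2*k)+1 := by omega
      have e2 : ((m+2-2*k:ℕ):ℝ) = ((m+1-2*k:ℕ):ℝ) + 1 := by rw [e1]; push_cast; ring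
      have e3 : ((Nat.factorial (m+2-2*k)):ℝ)
          = (((m+1-2*k:ℕ):ℝ)+1) * ((Nat.factorial (m+1-2*k)):ℝ) := by
        rw [e1, Nat.factorial_succ]; push_cast; ring
      rw [e2, e3, e1, pow_succ]
      have hfk : ((Nat.factorial k : ℝ)) ≠ 0 := by positivity
      have hfm : ((Nat.factorial (m+1-2*k) : ℝ)) ≠ 0 := by positivity
      have hp : ((m+1-2*k:ℕ):ℝ)+1 ≠ 0 := by positivity
      set c := ((m+1-2*k:ℕ):ℝ) with hcdef
      set fj := ((Nat.factorial (m+1-2*k)):ℝ) with hfjdef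
      set fk := ((Nat.factorial k):ℝ) with hfkdef
      field_simp [hfk, hfm, hp]
    · intro k hk1 hk2
      simp only [Finset.mem_range] at hk1 hk2
      have hz : m+2-2*k = 0 := by omega
      rw [hz]
      simp
  conv_lhs => rw [F, hr, Finset.mul_sum]
  rw [Finset.sum_congr rfl main, Finset.sum_add_distrib, partA, partB]
  ring

end Stmt15aux

namespace Stmt15aux2
open Stmt15aux

lemma P_pos {x : ℝ} (hx : 0 < x) (j : ℕ) : 0 < P x j := by
  induction j with
  | zero => simp [P_zero]
  | succ j ih => rw [P_succ]; positivity

lemma dup (μ : ℝ) (d : ℕ) : P (2*μ) (2*d) = 4^d * P μ d * P (μ+1/2) d := by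
  induction d with
  | zero => simp [P_zero]
  | succ d ih =>
    have h : 2*(d+1) = (2*d+1)+1 := by ring
    rw [h, P_succ, P_succ, P_succ, P_succ, ih]
    push_cast; ring

lemma F_m0 (μ : ℝ) (n : ℕ) : F μ n 0 = P μ n * 2^n := by
  simp [F]

lemma F_m1 (μ : ℝ) (n : ℕ) : F μ n 1 = P μ n * 2^n := by
  simp [F]

lemma four_pow (d : ℕ) : (4:ℝ)^d = 2^d * 2^d := by
  rw [← mul_pow]; norm_num

theorem key_aux (μ : ℝ) (hμ : 0 < μ) : ∀ N d m, 2*m+d ≤ N →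
    F μ (m+d) m * P (μ+1/2) d * 2^d * (Nat.factorial m : ℝ) = P (2*μ) (m+2*d) := by
  intro N
  induction N with
  | zero =>
    intro d m h
    have hd : d = 0 := by omega
    have hm : m = 0 := by omega
    subst hd; subst hm
    simp [F, P_zero]
  | succ N ih =>
    intro d m hle
    obtain _|_|m' := m
    · -- m = 0
      rw [Nat.zero_add, F_m0, Nat.factorial_zero, show (0:ℕ)+2*d = 2*d by omega, dup, four_pow]
      push_cast; ring
    · -- m = 1
      rw [show (1:ℕ)+d = d+1 by omega, F_m1]
      have hne : (2*μ+2*(d:ℝ)+1) ≠ 0 := by positivity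
      apply mul_right_cancel₀ hne
      have e : P (2*μ) (1+2*d) * (2*μ+2*(d:ℝ)+1) = P (2*μ) (2*(d+1)) := by
        rw [show 2*(d+1) = (1+2*d)+1 by omega, P_succ]; push_cast; ring
      rw [e, dup, four_pow, P_succ, P_succ, pow_succ]
      push_cast [Nat.factorial_one]; ring
    · obtain _|d' := d
      · -- diagonal case m = m'+2, d = 0
        have r := recB μ m'
        have IH1 := ih 0 (m'+1) (by omega)
        have IH2 := ih 0 m' (by omega)
        rw [Nat.add_zero, P_zero, pow_zero] at IH1 IH2 ⊢
        rw [mul_one, mul_one] at IH1 IH2 ⊢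
        -- expand things
        have q2 : P (2*μ) (m'+2) = P (2*μ) m' * (2*μ+(m':ℝ)) * (2*μ+(m':ℝ)+1) := by
          rw [show m'+2 = (m'+1)+1 from rfl, P_succ, P_succ]; push_cast; ring
        have q1 : P (2*μ) (m'+1) = P (2*μ) m' * (2*μ+(m':ℝ)) := by
          rw [P_succ]
        have f2 : ((Nat.factorial (m'+2)):ℝ)
            = ((m':ℝ)+2) * (((m':ℝ)+1) * (Nat.factorial m' : ℝ)) := by
          rw [Nat.factorial_succ, Nat.factorial_succ]; push_cast; ring
        have f1 : ((Nat.factorial (m'+1)):ℝ) = ((m':ℝ)+1) * (Nat.factorial m' : ℝ) := by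
          rw [Nat.factorial_succ]; push_cast; ring
        rw [q2, f2]
        rw [f1, q1] at IH1
        linear_combination (((m':ℝ)+1) * (Nat.factorial m' : ℝ)) * r
          + (2*(μ+(m':ℝ)+1)) * IH1 - ((2*μ+(m':ℝ))*((m':ℝ)+1)) * IH2
      · -- general case m = m'+2, d = d'+1
        have r := recA μ (m'+d'+1) m' (by omega)
        have IH1 := ih d' (m'+2) (by omega)
        have IH2 := ih (d'+1) m' (by omega)
        rw [show (m'+2)+(d'+1) = (m'+d'+1)+2 by omega]
        rw [show (m'+2)+d' = (m'+d'+1)+1 by omega] at IH1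
        rw [show m'+(d'+1) = m'+d'+1 by omega] at IH2
        rw [show (m'+2)+2*(d'+1) = (m'+2*d'+2)+1+1 by omega, P_succ, P_succ]
        rw [show (m'+2)+2*d' = m'+2*d'+2 by omega] at IH1
        rw [show m'+2*(d'+1) = m'+2*d'+2 by omega] at IH2
        have f2 : ((Nat.factorial (m'+2)):ℝ)
            = ((m':ℝ)+2) * (((m':ℝ)+1) * (Nat.factorial m' : ℝ)) := by
          rw [Nat.factorial_succ, Nat.factorial_succ]; push_cast; ring
        rw [f2] at IH1 ⊢
        rw [P_succ, pow_succ] at IH2 ⊢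
        push_cast at r IH1 IH2 ⊢
        linear_combination
          (P (μ+1/2) d' * (μ+1/2+(d':ℝ)) * 2^d' * 2 * (((m':ℝ)+2)*(((m':ℝ)+1)*(Nat.factorial m' : ℝ)))) * r
          + (4*(μ+(m':ℝ)+(d':ℝ)+2)*(μ+(d':ℝ)+1/2)) * IH1
          + (((m':ℝ)+2)*((m':ℝ)+1)) * IH2

theorem key (μ : ℝ) (hμ : 0 < μ) (d m : ℕ) :
    F μ (m+d) m * P (μ+1/2) d * 2^d * (Nat.factorial m : ℝ) = P (2*μ) (m+2*d) :=
  key_aux μ hμ (2*m+d) d m le_rfl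

end Stmt15aux2


namespace Stmt15aux

lemma Gamma_P (μ : ℝ) (hμ : 0 < μ) (m : ℕ) : Real.Gamma (μ + m) = Real.Gamma μ * P μ m := by
  induction m with
  | zero => simp [P_zero]
  | succ m ih =>
    have e : μ + ((m+1:ℕ):ℝ) = (μ + (m:ℕ)) + 1 := by push_cast; ring
    rw [e, Real.Gamma_add_one (by positivity), ih, P_succ]
    ring

lemma two_sub_pow (u : ℝ) (N n : ℕ) (hN : N ≤ n) :
    ((2:ℝ) - 2*u)^N
      = ∑ j ∈ Finset.range (n+1), ((N.choose j : ℕ):ℝ) * 2^N * (-1)^j * u^j := by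
  rw [show (2:ℝ) - 2*u = (-(2*u)) + 2 by ring, add_pow]
  rw [Finset.sum_subset (Finset.range_subset_range.2 (by omega : N+1 ≤ n+1))
    (by intro k _ hk2
        simp only [Finset.mem_range, not_lt] at hk2
        rw [Nat.choose_eq_zero_of_lt (by omega)]
        simp)]
  apply Finset.sum_congr rfl
  intro k hk
  simp only [Finset.mem_range] at hk
  rcases le_or_gt k N with h|h
  · rw [neg_pow, mul_pow]
    rw [show (2:ℝ)^N = 2^k * 2^(N-k) by rw [← pow_add]; congr 1; omega]
    ring
  · rw [Nat.choose_eq_zero_of_lt h]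
    simp

lemma gegen_expand (μ : ℝ) (hμ : 0 < μ) (n : ℕ) (τ : ℝ) :
    Gegenbauer μ n τ = ∑ j ∈ Finset.range (n+1),
      (-1:ℝ)^j * F μ n (n-j) / (Nat.factorial j : ℝ) * (1-τ)^j := by
  have hΓ : Real.Gamma μ ≠ 0 := (Real.Gamma_pos_of_pos hμ).ne'
  rw [Gegenbauer]
  have step1 : ∀ k ∈ Finset.range (n/2+1),
      ((-1 : ℝ) ^ k * Real.Gamma ((n : ℝ) - (k : ℝ) + μ) /
        (Real.Gamma μ * (Nat.factorial k : ℝ) * (Nat.factorial (n - 2 * k) : ℝ))) *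
        (2 * τ) ^ (n - 2 * k)
      = ∑ j ∈ Finset.range (n+1),
          ((-1:ℝ)^k * P μ (n-k) / ((Nat.factorial k : ℝ) * (Nat.factorial (n-2*k) : ℝ)))
            * (((n-2*k).choose j : ℕ):ℝ) * 2^(n-2*k) * (-1)^j * (1-τ)^j := by
    intro k hk
    simp only [Finset.mem_range] at hk
    have hc : (n:ℝ) - (k:ℝ) + μ = μ + ((n-k:ℕ):ℝ) := by
      rw [Nat.cast_sub (by omega : k ≤ n)]; ring
    rw [hc, Gamma_P μ hμ]
    rw [show 2*τ = (2:ℝ) - 2*(1-τ) by ring, two_sub_pow (1-τ) (n-2*k) n (by omega)]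
    rw [Finset.mul_sum]
    apply Finset.sum_congr rfl
    intro j _
    have hfk : ((Nat.factorial k : ℝ)) ≠ 0 := by positivity
    have hfn : ((Nat.factorial (n-2*k) : ℝ)) ≠ 0 := by positivity
    field_simp
  rw [Finset.sum_congr rfl step1, Finset.sum_comm]
  apply Finset.sum_congr rfl
  intro j hj
  simp only [Finset.mem_range] at hj
  rw [← Finset.sum_subset (Finset.range_subset_range.2 (by omega : (n-j)/2+1 ≤ n/2+1))
    (by intro k hk1 hk2
        simp only [Finset.mem_range, not_lt] at hk1 hk2
        rw [Nat.choose_eq_zero_of_lt (by omega : n-2*k < j)]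
        simp)]
  rw [F, Finset.mul_sum, Finset.sum_div, Finset.sum_mul]
  apply Finset.sum_congr rfl
  intro k hk
  simp only [Finset.mem_range] at hk
  have hjle : j ≤ n - 2*k := by omega
  have hcf : (((n-2*k).choose j : ℕ):ℝ) * (Nat.factorial j : ℝ) * (Nat.factorial ((n-2*k)-j) : ℝ)
      = (Nat.factorial (n-2*k) : ℝ) := by
    exact_mod_cast congrArg (Nat.cast : ℕ → ℝ) (Nat.choose_mul_factorial_mul_factorial hjle)
  have e : (n-j)-2*k = (n-2*k)-j := by omega
  rw [e]
  have hfk : ((Nat.factorial k : ℝ)) ≠ 0 := by positivity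
  have hfn : ((Nat.factorial (n-2*k) : ℝ)) ≠ 0 := by positivity
  have hfj : ((Nat.factorial j : ℝ)) ≠ 0 := by positivity
  have hfnj : ((Nat.factorial ((n-2*k)-j) : ℝ)) ≠ 0 := by positivity
  have hchoose : (((n-2*k).choose j : ℕ):ℝ)
      = (Nat.factorial (n-2*k):ℝ) / ((Nat.factorial j:ℝ) * (Nat.factorial ((n-2*k)-j):ℝ)) := by
    rw [eq_div_iff (by positivity)]
    linear_combination hcf
  rw [hchoose]
  field_simp


lemma P_add (x : ℝ) (n m : ℕ) : P x (n+m) = P x n * P (x+n) m := by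
  induction m with
  | zero => simp [P_zero]
  | succ m ih => rw [← add_assoc, P_succ, ih, P_succ]; push_cast; ring

lemma poch_neg (n j : ℕ) (h : j ≤ n) :
    P (-(n:ℝ)) j * ((Nat.factorial (n-j) : ℕ):ℝ) = (-1)^j * (Nat.factorial n : ℝ) := by
  induction j with
  | zero => simp [P_zero]
  | succ j ih =>
    have hj : j ≤ n := by omega
    specialize ih hj
    have e : n - j = (n-(j+1))+1 := by omega
    have hcast : ((n-(j+1):ℕ):ℝ) = (n:ℝ)-(j:ℝ)-1 := by
      rw [Nat.cast_sub (by omega)]; push_cast; ring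
    rw [e, Nat.factorial_succ] at ih
    push_cast [hcast] at ih
    rw [P_succ, pow_succ]
    push_cast
    linear_combination (-1:ℝ) * ih

end Stmt15aux

end AuxStmt15



open Real MeasureTheory Finset intervalIntegral

namespace Stmt15c

lemma real_beta {a b : ℝ} (ha : 0 < a) (hb : 0 < b) :
    ∫ s in (0:ℝ)..1, s^(a-1) * (1-s)^(b-1)
      = Real.Gamma a * Real.Gamma b / Real.Gamma (a+b) := by
  have h1 : Complex.Gamma a * Complex.Gamma b
      = Complex.Gamma ((a:ℂ)+(b:ℂ)) * Complex.betaIntegral a b :=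
    Complex.Gamma_mul_Gamma_eq_betaIntegral (by simpa using ha) (by simpa using hb)
  have h2 : Complex.betaIntegral a b
      = ((∫ s in (0:ℝ)..1, s^(a-1) * (1-s)^(b-1) : ℝ) : ℂ) := by
    rw [Complex.betaIntegral, ← intervalIntegral.integral_ofReal]
    apply intervalIntegral.integral_congr
    intro s hs
    rw [Set.uIcc_of_le (by norm_num : (0:ℝ) ≤ 1)] at hs
    obtain ⟨h0, h1'⟩ := hs
    push_cast
    rw [Complex.ofReal_cpow h0, Complex.ofReal_cpow (by linarith)]
    push_cast
    ring
  rw [h2] at h1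
  have h3 : Complex.Gamma ((a:ℂ)+(b:ℂ)) = ((Real.Gamma (a+b) : ℝ) : ℂ) := by
    rw [← Complex.ofReal_add, Complex.Gamma_ofReal]
  rw [h3, Complex.Gamma_ofReal, Complex.Gamma_ofReal] at h1
  have h4 : Real.Gamma a * Real.Gamma b
      = Real.Gamma (a+b) * ∫ s in (0:ℝ)..1, s^(a-1) * (1-s)^(b-1) := by
    exact_mod_cast h1
  have h5 : Real.Gamma (a+b) ≠ 0 := (Real.Gamma_pos_of_pos (by linarith)).ne'
  field_simp [h5]
  linarith [h4]

lemma rpow_mul_pow {t : ℝ} (ht : 0 ≤ t) {lam : ℝ} (hlam : 0 ≤ lam) (j : ℕ) :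
    t^lam * t^(j:ℕ) = t^(lam+(j:ℝ)) := by
  rcases eq_or_lt_of_le ht with h|h
  · rcases Nat.eq_zero_or_pos j with hj|hj
    · subst hj; simp
    · rw [← h]
      rw [zero_pow (by omega), mul_zero, Real.zero_rpow (by positivity)]
  · rw [← Real.rpow_natCast t j, ← Real.rpow_add h]

lemma integrable_aux {lam : ℝ} (hlam : 0 ≤ lam) (j : ℕ) (x : ℝ) :
    IntervalIntegrable
      (fun τ => (τ - x)^(-(1/2) : ℝ) * ((1-τ)^lam * (1-τ)^j)) volume x 1 := by
  apply IntervalIntegrable.mul_continuousOn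
  · have h := intervalIntegral.intervalIntegrable_rpow'
      (a := 0) (b := 1-x) (r := -(1/2)) (by norm_num)
    have := h.comp_sub_right x
    simpa using this
  · apply ContinuousOn.mul
    · exact (continuous_const.sub continuous_id).continuousOn.rpow_const
        (fun τ _ => Or.inr hlam)
    · exact ((continuous_const.sub continuous_id).pow j).continuousOn

lemma integral_aux {lam : ℝ} (hlam : 0 ≤ lam) (j : ℕ) {x : ℝ} (hx1 : x < 1) :
    ∫ τ in x..(1:ℝ), (τ - x)^(-(1/2) : ℝ) * ((1-τ)^lam * (1-τ)^j)
      = (1-x)^(lam + (j:ℝ) + 1/2)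
        * (Real.Gamma (1/2) * Real.Gamma (lam+(j:ℝ)+1) / Real.Gamma (lam+(j:ℝ)+3/2)) := by
  set h := 1 - x with hh
  have hhpos : 0 < h := by simp [hh]; linarith
  have hc : h ≠ 0 := hhpos.ne'
  have step1 : (∫ s in (0:ℝ)..1,
        (h*s)^(-(1/2) : ℝ) * ((1-(h*s+x))^lam * (1-(h*s+x))^j))
      = h⁻¹ * ∫ τ in x..(1:ℝ), (τ - x)^(-(1/2) : ℝ) * ((1-τ)^lam * (1-τ)^j) := by
    have key := intervalIntegral.integral_comp_mul_add
      (f := fun τ => (τ - x)^(-(1/2) : ℝ) * ((1-τ)^lam * (1-τ)^j))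
      (a := (0:ℝ)) (b := 1) (c := h) hc x
    simp only [mul_zero, zero_add, mul_one, hh] at key ⊢
    rw [show 1 - x + x = 1 by ring] at key
    have e : ∀ s:ℝ, ((1-x)*s + x - x : ℝ) = (1-x)*s := fun s => by ring
    simp only [e] at key
    rw [key, smul_eq_mul]
  have step2 : (∫ s in (0:ℝ)..1,
        (h*s)^(-(1/2) : ℝ) * ((1-(h*s+x))^lam * (1-(h*s+x))^j))
      = h^(-(1/2):ℝ) * h^lam * h^(j:ℕ) *
          ∫ s in (0:ℝ)..1, s^((1/2:ℝ)-1) * (1-s)^((lam+(j:ℝ)+1)-1) := by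
    rw [← intervalIntegral.integral_const_mul]
    apply intervalIntegral.integral_congr
    intro s hs
    rw [Set.uIcc_of_le (by norm_num : (0:ℝ) ≤ 1)] at hs
    obtain ⟨h0, h1'⟩ := hs
    dsimp only
    have e1 : 1 - (h*s+x) = h * (1-s) := by rw [hh]; ring
    rw [e1, Real.mul_rpow hhpos.le h0, Real.mul_rpow hhpos.le (by linarith), mul_pow]
    have e2 : ((1:ℝ)/2) - 1 = -(1/2) := by norm_num
    have e3 : (lam+(j:ℝ)+1)-1 = lam + (j:ℝ) := by ring
    rw [e2, e3, ← rpow_mul_pow (by linarith) hlam j]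
    ring
  have step3 : (∫ s in (0:ℝ)..1, s^((1/2:ℝ)-1) * (1-s)^((lam+(j:ℝ)+1)-1))
      = Real.Gamma (1/2) * Real.Gamma (lam+(j:ℝ)+1) / Real.Gamma (lam+(j:ℝ)+3/2) := by
    rw [real_beta (by norm_num) (by positivity)]
    rw [show (1:ℝ)/2 + (lam+(j:ℝ)+1) = lam+(j:ℝ)+3/2 by ring]
  have final : (∫ τ in x..(1:ℝ), (τ - x)^(-(1/2) : ℝ) * ((1-τ)^lam * (1-τ)^j))
      = h * ((h^(-(1/2):ℝ) * h^lam * h^(j:ℕ)) *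
          (Real.Gamma (1/2) * Real.Gamma (lam+(j:ℝ)+1) / Real.Gamma (lam+(j:ℝ)+3/2))) := by
    rw [← step3, ← step2, step1]
    field_simp
  rw [final]
  have hpow : h * (h^(-(1/2):ℝ) * h^lam * h^(j:ℕ)) = h^(lam + (j:ℝ) + 1/2) := by
    have h1' : h * h^(-(1/2):ℝ) = h^((1/2):ℝ) := by
      nth_rewrite 1 [← Real.rpow_one h]
      rw [← Real.rpow_add hhpos]; norm_num
    calc h * (h^(-(1/2):ℝ) * h^lam * h^(j:ℕ))
        = (h * h^(-(1/2):ℝ)) * h^lam * h^(j:ℕ) := by ring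
      _ = h^((1/2):ℝ) * h^lam * h^((j:ℝ)) := by rw [h1', Real.rpow_natCast]
      _ = h^((1/2) + lam + (j:ℝ)) := by rw [← Real.rpow_add hhpos, ← Real.rpow_add hhpos]
      _ = h^(lam + (j:ℝ) + 1/2) := by rw [show (1:ℝ)/2 + lam + (j:ℝ) = lam + (j:ℝ) + 1/2 by ring]
  rw [← hpow]
  ring
end Stmt15c



lemma scalar_core {u v F s sp g1 g2 pBn pBj pN P1 P32 fj fn fnj Y yj t2 : ℝ}
    (hu : u ≠ 0) (hP1 : P1 ≠ 0) (hP32 : P32 ≠ 0) (hg2 : g2 ≠ 0)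
    (hfj : fj ≠ 0) (hfn : fn ≠ 0) (hfnj : fnj ≠ 0) (ht2 : t2 ≠ 0)
    (hkey : F * P1 * t2 * fnj = pBn * pBj)
    (hneg : pN * fnj = s * fn)
    (huv : u * v = Y * yj) :
    u * (s * F / fj * (v * (sp * (g1 * P1) / (g2 * P32))))
      = sp * pBn / fn * (g1 / g2) * Y * (pN * pBj / (P32 * fj) * (yj / t2)) := by
  have hv : v = Y * yj / u := by rw [eq_div_iff hu]; linear_combination huv
  have hF : F = pBn * pBj / (P1 * t2 * fnj) := by
    rw [eq_div_iff (mul_ne_zero (mul_ne_zero hP1 ht2) hfnj)]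
    linear_combination hkey
  have hN : pN = s * fn / fnj := by rw [eq_div_iff hfnj]; linear_combination hneg
  rw [hv, hF, hN]
  field_simp

set_option maxHeartbeats 2000000 in
/-- `I^λ_− C_n^{λ+1/2}` as a hypergeometric polynomial. -/
theorem stmt15 (lam : ℝ) (hlam : 0 ≤ lam) (n : ℕ) (x : ℝ) (hx : x ∈ Set.Icc (-1 : ℝ) 1) :
    Iminus lam (Gegenbauer (lam + 1 / 2) n) x =
      (Real.sqrt Real.pi * (ascPochhammer ℝ n).eval (2 * lam + 1) / (Nat.factorial n : ℝ) *
          (Real.Gamma (lam + 1) / Real.Gamma (lam + 3 / 2))) *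
        (1 - x) * hyp2F1 n ((n : ℝ) + 2 * lam + 1) (lam + 3 / 2) ((1 - x) / 2) := by
  obtain ⟨hxm, hx1⟩ := hx
  rcases eq_or_lt_of_le hx1 with heq | hlt
  · -- x = 1
    subst heq
    rw [Iminus, intervalIntegral.integral_same, mul_zero]
    norm_num
  · -- x < 1
    have hmu : (0:ℝ) < lam + 1/2 := by linarith
    have h1x : (0:ℝ) < 1 - x := by linarith
    have hpt : ∀ τ:ℝ, (τ - x)^(-(1/2):ℝ) * (1-τ)^lam * Gegenbauer (lam+1/2) n τ
        = ∑ j ∈ Finset.range (n+1),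
            ((-1:ℝ)^j * Stmt15aux.F (lam+1/2) n (n-j) / (Nat.factorial j:ℝ)) *
              ((τ - x)^(-(1/2):ℝ) * ((1-τ)^lam * (1-τ)^j)) := by
      intro τ
      rw [Stmt15aux.gegen_expand (lam+1/2) (by linarith) n τ, Finset.mul_sum]
      refine Finset.sum_congr rfl ?_
      intro j _
      ring
    rw [Iminus, intervalIntegral.integral_congr (g := fun τ => ∑ j ∈ Finset.range (n+1),
          ((-1:ℝ)^j * Stmt15aux.F (lam+1/2) n (n-j) / (Nat.factorial j:ℝ)) *
            ((τ - x)^(-(1/2):ℝ) * ((1-τ)^lam * (1-τ)^j))) (fun τ _ => hpt τ)]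
    rw [intervalIntegral.integral_finset_sum
      (fun j _ => (Stmt15c.integrable_aux hlam j x).const_mul _)]
    rw [Finset.mul_sum, hyp2F1, Finset.mul_sum]
    refine Finset.sum_congr rfl ?_
    intro j hj
    simp only [Finset.mem_range] at hj
    have hj' : j ≤ n := by omega
    rw [intervalIntegral.integral_const_mul, Stmt15c.integral_aux hlam j hlt,
        Real.Gamma_one_half_eq, div_pow]
    have hP1 : (0:ℝ) < Stmt15aux.P (lam+1) j := Stmt15aux2.P_pos (by linarith) j
    have hP32 : (0:ℝ) < Stmt15aux.P (lam+3/2) j := Stmt15aux2.P_pos (by linarith) j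
    have hfj : ((Nat.factorial j:ℝ)) ≠ 0 := by positivity
    have hfn : ((Nat.factorial n:ℝ)) ≠ 0 := by positivity
    have hfnj : ((Nat.factorial (n-j):ℝ)) ≠ 0 := by positivity
    have hG32 : Real.Gamma (lam+3/2) ≠ 0 := (Real.Gamma_pos_of_pos (by linarith)).ne'
    have keyj : Stmt15aux.F (lam+1/2) n (n-j) * Stmt15aux.P (lam+1) j * 2^j
          * ((Nat.factorial (n-j)):ℝ) = Stmt15aux.P (2*lam+1) (n+j) := by
      have hk := Stmt15aux2.key (lam+1/2) hmu j (n-j)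
      rw [show (n-j)+j = n by omega, show (n-j)+2*j = n+j by omega,
          show (lam+1/2)+1/2 = lam+1 by ring, show 2*(lam+1/2) = 2*lam+1 by ring] at hk
      linear_combination hk
    have hG1 : Real.Gamma (lam + (j:ℝ) + 1) = Real.Gamma (lam+1) * Stmt15aux.P (lam+1) j := by
      rw [show lam + (j:ℝ) + 1 = (lam+1) + (j:ℝ) by ring]
      exact Stmt15aux.Gamma_P (lam+1) (by linarith) j
    have hG2 : Real.Gamma (lam + (j:ℝ) + 3/2)
        = Real.Gamma (lam+3/2) * Stmt15aux.P (lam+3/2) j := by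
      rw [show lam + (j:ℝ) + 3/2 = (lam+3/2) + (j:ℝ) by ring]
      exact Stmt15aux.Gamma_P (lam+3/2) (by linarith) j
    have hu : (0:ℝ) < (1-x)^(-lam+1/2 : ℝ) := Real.rpow_pos_of_pos h1x _
    have huv : (1-x)^(-lam+1/2 : ℝ) * (1-x)^(lam+(j:ℝ)+1/2 : ℝ) = (1-x) * (1-x)^j := by
      rw [← Real.rpow_add h1x,
          show (-lam+1/2) + (lam+(j:ℝ)+1/2) = ((j+1:ℕ):ℝ) by push_cast; ring,
          Real.rpow_natCast, pow_succ]
      ring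
    have hG1' : Real.Gamma (lam + (j:ℝ) + 1)
        = Real.Gamma (lam+1) * (ascPochhammer ℝ j).eval (lam+1) := hG1
    have hG2' : Real.Gamma (lam + (j:ℝ) + 3/2)
        = Real.Gamma (lam+3/2) * (ascPochhammer ℝ j).eval (lam+3/2) := hG2
    have hP1' : ((ascPochhammer ℝ j).eval (lam+1)) ≠ 0 := hP1.ne'
    have hP32' : ((ascPochhammer ℝ j).eval (lam+3/2)) ≠ 0 := hP32.ne'
    have hkey2P : Stmt15aux.F (lam+1/2) n (n-j) * Stmt15aux.P (lam+1) j * 2^j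
          * ((Nat.factorial (n-j)):ℝ)
        = Stmt15aux.P (2*lam+1) n * Stmt15aux.P ((n:ℝ)+2*lam+1) j := by
      have hPadd : Stmt15aux.P (2*lam+1) (n+j)
          = Stmt15aux.P (2*lam+1) n * Stmt15aux.P ((n:ℝ)+2*lam+1) j := by
        rw [Stmt15aux.P_add, show 2*lam+1+(n:ℝ) = (n:ℝ)+2*lam+1 by ring]
      linear_combination keyj + hPadd
    have hkey2 : Stmt15aux.F (lam+1/2) n (n-j) * (ascPochhammer ℝ j).eval (lam+1) * 2^j
          * ((Nat.factorial (n-j)):ℝ)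
        = (ascPochhammer ℝ n).eval (2*lam+1) * (ascPochhammer ℝ j).eval ((n:ℝ)+2*lam+1) :=
      hkey2P
    have hneg2 : (ascPochhammer ℝ j).eval (-(n:ℝ)) * ((Nat.factorial (n-j)):ℝ)
        = (-1:ℝ)^j * (Nat.factorial n : ℝ) := Stmt15aux.poch_neg n j hj'
    rw [hG1', hG2']
    exact scalar_core hu.ne' hP1' hP32' hG32 hfj hfn hfnj
      (pow_ne_zero j two_ne_zero) hkey2 hneg2 huv
end

section
/- For every λ > −1/2, n ∈ ℕ₀ and x ∈ [−1,1]: applying I^λ_+ to the function t ↦ ₂F₁(−n, n+2λ+1; λ+1; (1+t)/2) gives √π (Γ(λ+1)/Γ(λ+3/2)) (1+x) ₂F₁(−n, n+2λ+1; λ+3/2; (1+x)/2), and applying I^λ_− to the function t ↦ ₂F₁(−n, n+2λ+1; λ+1; (1−t)/2) gives √π (Γ(λ+1)/Γ(λ+3/2)) (1−x) ₂F₁(−n, n+2λ+1; λ+3/2; (1−x)/2). -/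
open Real MeasureTheory Finset intervalIntegral

lemma myBetaIntegrable {a b : ℝ} (ha : -1 < a) (hb : -1 < b) :
    IntervalIntegrable (fun s : ℝ => s ^ a * (1 - s) ^ b) volume (0:ℝ) 1 := by
  apply IntervalIntegrable.trans (b := (1/2 : ℝ))
  · apply (intervalIntegral.intervalIntegrable_rpow' ha).mul_continuousOn
    apply ContinuousOn.rpow_const (by fun_prop)
    intro x hx
    rw [Set.uIcc_of_le (by norm_num)] at hx
    left; simp only [Set.mem_Icc] at hx; intro h; linarith [hx.2]
  · have h1 : IntervalIntegrable (fun s : ℝ => (1 - s) ^ b) volume (1/2) 1 := by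
      have h0 := (intervalIntegral.intervalIntegrable_rpow' (a := (1/2:ℝ)) (b := 0) hb).comp_sub_left 1
      norm_num at h0 ⊢
      exact h0
    apply h1.continuousOn_mul
    apply ContinuousOn.rpow_const (by fun_prop)
    intro x hx
    rw [Set.uIcc_of_le (by norm_num)] at hx
    left; simp only [Set.mem_Icc] at hx; intro h; rw [h] at hx; linarith [hx.1]

lemma myBetaValue {a b : ℝ} (ha : 0 < a) (hb : 0 < b) :
    ∫ s in (0:ℝ)..1, s ^ (a-1) * (1 - s) ^ (b-1) =
      Real.Gamma a * Real.Gamma b / Real.Gamma (a + b) := by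
  have h := Complex.Gamma_mul_Gamma_eq_betaIntegral (s := a) (t := b) (by simpa) (by simpa)
  have key : Complex.betaIntegral a b =
      ((∫ s in (0:ℝ)..1, s ^ (a-1) * (1-s) ^ (b-1) : ℝ) : ℂ) := by
    rw [Complex.betaIntegral, ← intervalIntegral.integral_ofReal]
    apply intervalIntegral.integral_congr
    intro s hs
    rw [Set.uIcc_of_le (by norm_num)] at hs
    obtain ⟨h0, h1⟩ := hs
    simp only []
    rw [Complex.ofReal_mul, Complex.ofReal_cpow h0, Complex.ofReal_cpow (by linarith)]
    push_cast
    ring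
  rw [key] at h
  rw [show ((a:ℂ) + (b:ℂ)) = ((a+b : ℝ) : ℂ) by push_cast; ring] at h
  rw [Complex.Gamma_ofReal, Complex.Gamma_ofReal, Complex.Gamma_ofReal, ← Complex.ofReal_mul,
    ← Complex.ofReal_mul] at h
  have := Complex.ofReal_injective h
  have hG : Real.Gamma (a + b) ≠ 0 := (Real.Gamma_pos_of_pos (by linarith)).ne'
  field_simp
  linarith [this]

lemma myGammaPoch {a : ℝ} (ha : 0 < a) (k : ℕ) :
    Real.Gamma (a + k) = Real.Gamma a * (ascPochhammer ℝ k).eval a := by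
  induction k with
  | zero => simp
  | succ k ih =>
    have h1 : a + ((k:ℕ)+1 : ℕ) = (a + k) + 1 := by push_cast; ring
    rw [h1, Real.Gamma_add_one (by positivity), ih, ascPochhammer_succ_eval]
    ring

lemma myPochPos {a : ℝ} (ha : 0 < a) (k : ℕ) : 0 < (ascPochhammer ℝ k).eval a :=
  ascPochhammer_pos k a ha

lemma myKeyInt {μ x : ℝ} (hμ : -1 < μ) (hx : -1 < x) :
    ∫ τ in (-1:ℝ)..x, (x - τ) ^ (-(1/2):ℝ) * (1 + τ) ^ μ =
      (1 + x) ^ (μ + 1/2) *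
        (Real.Gamma (μ + 1) * Real.Gamma (1/2) / Real.Gamma (μ + 3/2)) := by
  have hc0 : (0:ℝ) < 1 + x := by linarith
  have sub := intervalIntegral.integral_comp_mul_add
      (fun τ => (x - τ) ^ (-(1/2):ℝ) * (1 + τ) ^ μ) (ne_of_gt hc0) (-1) (a := 0) (b := 1)
  simp only [mul_zero, zero_add, mul_one, smul_eq_mul] at sub
  have hends : (1 + x) * 1 + -1 = x := by ring
  rw [show (1 + x) + -1 = x by ring] at sub
  have hint : (∫ s in (0:ℝ)..1, (x - ((1+x)*s + -1)) ^ (-(1/2):ℝ) * (1 + ((1+x)*s + -1)) ^ μ)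
      = ((1+x) ^ (-(1/2):ℝ) * (1+x) ^ μ) * ∫ s in (0:ℝ)..1, s ^ μ * (1-s) ^ (-(1/2):ℝ) := by
    rw [← intervalIntegral.integral_const_mul]
    apply intervalIntegral.integral_congr
    intro s hs
    rw [Set.uIcc_of_le (by norm_num)] at hs
    obtain ⟨h0, h1⟩ := hs
    simp only []
    rw [show x - ((1+x)*s + -1) = (1+x)*(1-s) by ring,
      show 1 + ((1+x)*s + -1) = (1+x)*s by ring,
      Real.mul_rpow (le_of_lt hc0) (by linarith : (0:ℝ) ≤ 1 - s),
      Real.mul_rpow (le_of_lt hc0) h0]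
    ring
  have hB := myBetaValue (a := μ + 1) (b := 1/2) (by linarith) (by norm_num)
  rw [show μ + 1 - 1 = μ by ring, show (1/2 : ℝ) - 1 = -(1/2) by norm_num,
    show μ + 1 + (1/2:ℝ) = μ + 3/2 by ring] at hB
  rw [hint, hB] at sub
  rw [inv_mul_eq_div, eq_div_iff (ne_of_gt hc0)] at sub
  rw [← sub]
  have hpow : (1+x) ^ (μ + 1/2 : ℝ) = (1+x) * ((1+x) ^ (-(1/2):ℝ) * (1+x) ^ μ) := by
    rw [show μ + (1/2:ℝ) = 1 + (-(1/2)) + μ by ring, Real.rpow_add hc0, Real.rpow_add hc0,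
      Real.rpow_one]
    ring
  rw [hpow]
  ring

set_option maxHeartbeats 1600000 in
lemma myIplus {lam : ℝ} (hlam : -(1 / 2) < lam) (n : ℕ) {x : ℝ} (hx : -1 < x) :
    Iplus lam (fun t => hyp2F1 n ((n : ℝ) + 2 * lam + 1) (lam + 1) ((1 + t) / 2)) x =
      Real.sqrt Real.pi * (Real.Gamma (lam + 1) / Real.Gamma (lam + 3 / 2)) * (1 + x) *
        hyp2F1 n ((n : ℝ) + 2 * lam + 1) (lam + 3 / 2) ((1 + x) / 2) := by
  have hc0 : (0:ℝ) < 1 + x := by linarith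
  set b' : ℝ := (n : ℝ) + 2 * lam + 1 with hb'
  set F : ℝ → ℝ := fun τ => (x - τ) ^ (-(1/2):ℝ) * (1 + τ) ^ lam *
    hyp2F1 n b' (lam + 1) ((1 + τ) / 2) with hF
  have sub := intervalIntegral.integral_comp_mul_add F (ne_of_gt hc0) (-1) (a := 0) (b := 1)
  simp only [mul_zero, zero_add, mul_one, smul_eq_mul] at sub
  rw [show (1 + x) + -1 = x by ring] at sub
  -- pointwise expansion of the substituted integrand
  have hint : (∫ s in (0:ℝ)..1, F ((1 + x) * s + -1)) =
      ∑ k ∈ Finset.range (n + 1),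
        (((ascPochhammer ℝ k).eval (-(n : ℝ)) * (ascPochhammer ℝ k).eval b') /
            ((ascPochhammer ℝ k).eval (lam + 1) * (Nat.factorial k : ℝ)) *
          ((1 + x) / 2) ^ k * ((1 + x) ^ (lam:ℝ) * (1 + x) ^ (-(1/2):ℝ))) *
        ∫ s in (0:ℝ)..1, s ^ (lam + (k:ℝ)) * (1 - s) ^ (-(1/2):ℝ) := by
    rw [show (∑ k ∈ Finset.range (n + 1),
        (((ascPochhammer ℝ k).eval (-(n : ℝ)) * (ascPochhammer ℝ k).eval b') /
            ((ascPochhammer ℝ k).eval (lam + 1) * (Nat.factorial k : ℝ)) *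
          ((1 + x) / 2) ^ k * ((1 + x) ^ (lam:ℝ) * (1 + x) ^ (-(1/2):ℝ))) *
        ∫ s in (0:ℝ)..1, s ^ (lam + (k:ℝ)) * (1 - s) ^ (-(1/2):ℝ)) =
        ∑ k ∈ Finset.range (n + 1), ∫ s in (0:ℝ)..1,
        (((ascPochhammer ℝ k).eval (-(n : ℝ)) * (ascPochhammer ℝ k).eval b') /
            ((ascPochhammer ℝ k).eval (lam + 1) * (Nat.factorial k : ℝ)) *
          ((1 + x) / 2) ^ k * ((1 + x) ^ (lam:ℝ) * (1 + x) ^ (-(1/2):ℝ))) *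
        (s ^ (lam + (k:ℝ)) * (1 - s) ^ (-(1/2):ℝ)) from
      Finset.sum_congr rfl fun k _ => (intervalIntegral.integral_const_mul _ _).symm]
    rw [← intervalIntegral.integral_finset_sum]
    · apply intervalIntegral.integral_congr
      intro s hs
      rw [Set.uIcc_of_le (by norm_num)] at hs
      obtain ⟨h0, h1⟩ := hs
      simp only [hF, hyp2F1]
      rw [show x - ((1 + x) * s + -1) = (1 + x) * (1 - s) by ring,
        show 1 + ((1 + x) * s + -1) = (1 + x) * s by ring,
        Real.mul_rpow (le_of_lt hc0) (by linarith : (0:ℝ) ≤ 1 - s),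
        Real.mul_rpow (le_of_lt hc0) h0, Finset.mul_sum]
      apply Finset.sum_congr rfl
      intro k _
      have hss : s ^ (lam:ℝ) * s ^ k = s ^ (lam + (k:ℝ)) := by
        rcases eq_or_lt_of_le h0 with h | h
        · rcases Nat.eq_zero_or_pos k with hk | hk
          · subst hk; simp
          · rw [← h]
            have hk1 : (1:ℝ) ≤ (k:ℝ) := by exact_mod_cast hk
            rw [zero_pow (by omega : k ≠ 0), mul_zero,
              Real.zero_rpow (show (0:ℝ) < lam + (k:ℝ) by linarith).ne']
        · rw [← Real.rpow_natCast s k, ← Real.rpow_add h]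
      rw [← hss]
      rw [show (1 + x) * s / 2 = ((1 + x)/2) * s by ring, mul_pow]
      ring
    · intro k _
      have hint2 : IntervalIntegrable
          (fun s : ℝ => s ^ (lam + (k:ℝ)) * (1 - s) ^ (-(1/2):ℝ)) volume (0:ℝ) 1 := by
        apply myBetaIntegrable _ (by norm_num)
        have : (0:ℝ) ≤ (k:ℝ) := Nat.cast_nonneg k
        linarith
      exact hint2.const_mul _
  -- evaluate each beta integral
  have hBk : ∀ k ∈ Finset.range (n + 1),
      (∫ s in (0:ℝ)..1, s ^ (lam + (k:ℝ)) * (1 - s) ^ (-(1/2):ℝ)) =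
        Real.Gamma (lam + 1) * (ascPochhammer ℝ k).eval (lam + 1) * Real.sqrt Real.pi /
          (Real.Gamma (lam + 3/2) * (ascPochhammer ℝ k).eval (lam + 3/2)) := by
    intro k _
    have hB := myBetaValue (a := lam + (k:ℝ) + 1) (b := 1/2)
      (by have : (0:ℝ) ≤ (k:ℝ) := Nat.cast_nonneg k; linarith) (by norm_num)
    rw [show lam + (k:ℝ) + 1 - 1 = lam + (k:ℝ) by ring,
      show (1/2 : ℝ) - 1 = -(1/2) by norm_num] at hB
    rw [hB, show lam + (k:ℝ) + 1 + 1/2 = (lam + 3/2) + (k:ℝ) by ring,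
      show lam + (k:ℝ) + 1 = (lam + 1) + (k:ℝ) by ring,
      myGammaPoch (by linarith) k, myGammaPoch (by linarith) k, Real.Gamma_one_half_eq]
  rw [Finset.sum_congr rfl (fun k hk => by rw [hBk k hk])] at hint
  rw [hint] at sub
  rw [inv_mul_eq_div, eq_div_iff (ne_of_gt hc0)] at sub
  have hfactor : (∑ k ∈ Finset.range (n + 1),
        (((ascPochhammer ℝ k).eval (-(n : ℝ)) * (ascPochhammer ℝ k).eval b') /
            ((ascPochhammer ℝ k).eval (lam + 1) * (Nat.factorial k : ℝ)) *
          ((1 + x) / 2) ^ k * ((1 + x) ^ (lam:ℝ) * (1 + x) ^ (-(1/2):ℝ))) *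
        (Real.Gamma (lam + 1) * (ascPochhammer ℝ k).eval (lam + 1) * Real.sqrt Real.pi /
          (Real.Gamma (lam + 3/2) * (ascPochhammer ℝ k).eval (lam + 3/2)))) =
      ((1 + x) ^ (lam:ℝ) * (1 + x) ^ (-(1/2):ℝ)) * ∑ k ∈ Finset.range (n + 1),
        (((ascPochhammer ℝ k).eval (-(n : ℝ)) * (ascPochhammer ℝ k).eval b') /
            ((ascPochhammer ℝ k).eval (lam + 1) * (Nat.factorial k : ℝ)) *
          ((1 + x) / 2) ^ k *
        (Real.Gamma (lam + 1) * (ascPochhammer ℝ k).eval (lam + 1) * Real.sqrt Real.pi /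
          (Real.Gamma (lam + 3/2) * (ascPochhammer ℝ k).eval (lam + 3/2)))) := by
    rw [Finset.mul_sum]; exact Finset.sum_congr rfl fun k _ => by ring
  rw [hfactor] at sub
  -- now assemble
  rw [Iplus, ← hF, ← sub, hyp2F1]
  rw [show ∀ P Q S c : ℝ, P * ((Q * S) * c) = (P * Q) * (S * c) from fun _ _ _ _ => by ring]
  have hcpow : (1 + x) ^ (-lam + 1/2 : ℝ) * ((1 + x) ^ (lam:ℝ) * (1 + x) ^ (-(1/2):ℝ)) = 1 := by
    rw [← Real.rpow_add hc0, ← Real.rpow_add hc0,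
      show -lam + 1/2 + (lam + -(1/2)) = (0:ℝ) by ring, Real.rpow_zero]
  rw [hcpow, one_mul]
  simp only [Finset.sum_mul, Finset.mul_sum]
  apply Finset.sum_congr rfl
  intro k _
  have hP1 : (ascPochhammer ℝ k).eval (lam + 1) ≠ 0 :=
    (ascPochhammer_pos k _ (by linarith)).ne'
  have hkey : ∀ (N fac P1 P2 G1 G32 z c sp : ℝ), P1 ≠ 0 →
      N / (P1 * fac) * z * (G1 * P1 * sp / (G32 * P2)) * c
        = sp * (G1 / G32) * c * (N / (P2 * fac) * z) := by
    intro N fac P1 P2 G1 G32 z c sp h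
    field_simp
  exact hkey _ _ _ _ _ _ _ _ _ hP1


lemma myIminusIplus (lam : ℝ) (f : ℝ → ℝ) (x : ℝ) :
    Iminus lam f x = Iplus lam (fun t => f (-t)) (-x) := by
  rw [Iminus, Iplus, show (1:ℝ) + -x = 1 - x by ring]
  congr 1
  have h := intervalIntegral.integral_comp_neg (a := (-1:ℝ)) (b := -x)
    (f := fun τ => (τ - x) ^ (-(1/2):ℝ) * (1 - τ) ^ lam * f τ)
  rw [neg_neg, show -(-1:ℝ) = 1 by norm_num] at h
  rw [← h]
  apply intervalIntegral.integral_congr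
  intro σ _
  simp only []
  rw [show -σ - x = -x - σ by ring, show (1:ℝ) - -σ = 1 + σ by ring]


/-- action of `I^λ_±` on the hypergeometric polynomials
`₂F₁(−n, n+2λ+1; λ+1; (1±t)/2)`. -/
theorem stmt16 (lam : ℝ) (hlam : -(1 / 2) < lam) (n : ℕ) (x : ℝ)
    (hx : x ∈ Set.Icc (-1 : ℝ) 1) :
    Iplus lam (fun t => hyp2F1 n ((n : ℝ) + 2 * lam + 1) (lam + 1) ((1 + t) / 2)) x =
      Real.sqrt Real.pi * (Real.Gamma (lam + 1) / Real.Gamma (lam + 3 / 2)) * (1 + x) *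
        hyp2F1 n ((n : ℝ) + 2 * lam + 1) (lam + 3 / 2) ((1 + x) / 2) ∧
    Iminus lam (fun t => hyp2F1 n ((n : ℝ) + 2 * lam + 1) (lam + 1) ((1 - t) / 2)) x =
      Real.sqrt Real.pi * (Real.Gamma (lam + 1) / Real.Gamma (lam + 3 / 2)) * (1 - x) *
        hyp2F1 n ((n : ℝ) + 2 * lam + 1) (lam + 3 / 2) ((1 - x) / 2) := by
  obtain ⟨hx1, hx2⟩ := hx
  constructor
  · rcases eq_or_lt_of_le hx1 with h | h
    · rw [← h]
      simp [Iplus]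
    · exact myIplus hlam n h
  · rw [myIminusIplus]
    have hfun : (fun t => hyp2F1 n ((n : ℝ) + 2 * lam + 1) (lam + 1) ((1 - -t) / 2)) =
        (fun t => hyp2F1 n ((n : ℝ) + 2 * lam + 1) (lam + 1) ((1 + t) / 2)) := by
      funext t; rw [show (1:ℝ) - -t = 1 + t by ring]
    rw [hfun]
    rcases eq_or_lt_of_le hx2 with h | h
    · rw [h]
      simp [Iplus]
    · have := myIplus hlam n (show (-1:ℝ) < -x by linarith)
      rw [this, show (1:ℝ) + -x = 1 - x by ring]
end

section
/- For every λ > 0, n ∈ ℕ₀ and x ∈ [−1,1], 𝓓^λ_+ C_n^λ(x) = (√π Γ(λ+1/2)/Γ(λ)) · (2(n+2λ)/(n+λ)) · C_{n−1}^{λ+1/2}(x) (with the convention C_{−1}^{λ+1/2} = 0), and 𝓓^λ_− C_n^λ(x) = (√π Γ(λ+1/2)/Γ(λ)) · (2n/(n+λ)) · C_n^{λ+1/2}(x). -/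
open Real MeasureTheory Finset intervalIntegral

lemma realBeta {a b : ℝ} (ha : 0 < a) (hb : 0 < b) :
    ∫ s in (0:ℝ)..1, s ^ (a - 1) * (1 - s) ^ (b - 1) =
      Real.Gamma a * Real.Gamma b / Real.Gamma (a + b) := by
  have h := Complex.Gamma_mul_Gamma_eq_betaIntegral (s := a) (t := b) (by simpa using ha)
    (by simpa using hb)
  have key : Complex.betaIntegral a b =
      ((∫ s in (0:ℝ)..1, s ^ (a - 1) * (1 - s) ^ (b - 1) : ℝ) : ℂ) := by
    rw [Complex.betaIntegral, ← intervalIntegral.integral_ofReal]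
    apply intervalIntegral.integral_congr
    intro x hx
    rw [Set.uIcc_of_le (by norm_num : (0:ℝ) ≤ 1)] at hx
    show (x:ℂ) ^ ((a:ℂ) - 1) * (1 - (x:ℂ)) ^ ((b:ℂ) - 1) = ((x ^ (a - 1) * (1 - x) ^ (b - 1) : ℝ) : ℂ)
    rw [show ((x ^ (a - 1) * (1 - x) ^ (b - 1) : ℝ) : ℂ) =
      ((x ^ (a-1) : ℝ) : ℂ) * (((1-x) ^ (b-1) : ℝ) : ℂ) by push_cast; ring,
      Complex.ofReal_cpow hx.1, Complex.ofReal_cpow (by linarith [hx.2])]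
    push_cast
    ring
  rw [key, ← Complex.ofReal_add, Complex.Gamma_ofReal, Complex.Gamma_ofReal,
    Complex.Gamma_ofReal, ← Complex.ofReal_mul, ← Complex.ofReal_mul] at h
  have := Complex.ofReal_injective h
  have hG : Real.Gamma (a + b) ≠ 0 := (Real.Gamma_pos_of_pos (by linarith)).ne'
  field_simp
  linarith [this]

lemma beta_int {μ : ℝ} (hμ : 0 < μ) {x : ℝ} (hx : -1 < x) :
    ∫ τ in (-1:ℝ)..x, (x - τ) ^ (-(1/2) : ℝ) * (1 + τ) ^ (μ - 1) =
      Real.Gamma μ * Real.Gamma (1/2) / Real.Gamma (μ + 1/2) * (1 + x) ^ (μ - 1/2) := by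
  have hc : (0:ℝ) < 1 + x := by linarith
  have hsub := intervalIntegral.integral_comp_mul_add (a := (0:ℝ)) (b := 1)
    (f := fun τ => (x - τ) ^ (-(1/2) : ℝ) * (1 + τ) ^ (μ - 1)) hc.ne' (-1)
  rw [show (1 + x) * 0 + -1 = (-1:ℝ) by ring, show (1 + x) * 1 + -1 = x by ring] at hsub
  have key : ∫ s in (0:ℝ)..1,
      (x - ((1 + x) * s + -1)) ^ (-(1/2) : ℝ) * (1 + ((1 + x) * s + -1)) ^ (μ - 1)
      = (1 + x) ^ (-(1/2) : ℝ) * (1 + x) ^ (μ - 1) *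
        (Real.Gamma μ * Real.Gamma (1/2) / Real.Gamma (μ + 1/2)) := by
    have congr1 : ∀ s ∈ Set.uIcc (0:ℝ) 1,
        (x - ((1 + x) * s + -1)) ^ (-(1/2) : ℝ) * (1 + ((1 + x) * s + -1)) ^ (μ - 1)
        = (1 + x) ^ (-(1/2) : ℝ) * (1 + x) ^ (μ - 1) * (s ^ (μ - 1) * (1 - s) ^ ((1:ℝ)/2 - 1)) := by
      intro s hs
      rw [Set.uIcc_of_le (by norm_num : (0:ℝ) ≤ 1)] at hs
      rw [show x - ((1 + x) * s + -1) = (1 + x) * (1 - s) by ring,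
        show 1 + ((1 + x) * s + -1) = (1 + x) * s by ring,
        Real.mul_rpow hc.le (by linarith [hs.2]), Real.mul_rpow hc.le hs.1]
      norm_num
      ring
    rw [intervalIntegral.integral_congr congr1, intervalIntegral.integral_const_mul,
      realBeta hμ (by norm_num : (0:ℝ) < 1/2)]
  rw [key] at hsub
  have goal2 : (1 + x) * ((1 + x) ^ (-(1/2) : ℝ) * (1 + x) ^ (μ - 1)) = (1 + x) ^ (μ - 1/2) := by
    rw [show μ - 1/2 = 1 + (-(1/2) : ℝ) + (μ - 1) by ring, Real.rpow_add hc,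
      Real.rpow_add hc, Real.rpow_one]
    ring
  calc ∫ τ in (-1:ℝ)..x, (x - τ) ^ (-(1/2) : ℝ) * (1 + τ) ^ (μ - 1)
      = (1 + x) * ((1 + x)⁻¹ • ∫ τ in (-1:ℝ)..x, (x - τ) ^ (-(1/2) : ℝ) * (1 + τ) ^ (μ - 1)) := by
        rw [smul_eq_mul, ← mul_assoc, mul_inv_cancel₀ hc.ne', one_mul]
    _ = (1 + x) * ((1 + x) ^ (-(1/2) : ℝ) * (1 + x) ^ (μ - 1) *
        (Real.Gamma μ * Real.Gamma (1/2) / Real.Gamma (μ + 1/2))) := by rw [← hsub]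
    _ = _ := by rw [← mul_assoc, goal2]; ring

lemma integrable_ker {q : ℝ} (hq : -1 < q) {y : ℝ} (hy : -1 < y) :
    IntervalIntegrable (fun τ => (y - τ) ^ (-(1/2) : ℝ) * (1 + τ) ^ q) volume (-1) y := by
  set m : ℝ := (y - 1) / 2 with hm
  have hm1 : -1 < m := by rw [hm]; linarith
  have hm2 : m < y := by rw [hm]; linarith
  have part1 : IntervalIntegrable (fun τ => (y - τ) ^ (-(1/2) : ℝ) * (1 + τ) ^ q)
      volume (-1) m := by
    have hint : IntervalIntegrable (fun τ : ℝ => (τ + 1) ^ q) volume (-1) m := by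
      have := (intervalIntegrable_rpow' (a := 0) (b := m + 1) hq).comp_add_right 1
      simpa using this
    have hcont : ContinuousOn (fun τ : ℝ => (y - τ) ^ (-(1/2) : ℝ)) (Set.uIcc (-1) m) := by
      apply ContinuousOn.rpow_const
      · exact (continuous_const.sub continuous_id).continuousOn
      · intro τ hτ
        rw [Set.uIcc_of_le hm1.le] at hτ
        exact Or.inl (ne_of_gt (show (0:ℝ) < y - τ by linarith [hτ.2]))
    have h2 := hint.continuousOn_mul hcont
    have : (fun x : ℝ => (y - x) ^ (-(1/2):ℝ) * (x + 1) ^ q)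
        = fun τ : ℝ => (y - τ) ^ (-(1/2):ℝ) * (1 + τ) ^ q := by
      funext τ; rw [add_comm]
    rwa [this] at h2
  have part2 : IntervalIntegrable (fun τ => (y - τ) ^ (-(1/2) : ℝ) * (1 + τ) ^ q)
      volume m y := by
    have hint : IntervalIntegrable (fun τ : ℝ => (y - τ) ^ (-(1/2) : ℝ)) volume m y := by
      have := (intervalIntegrable_rpow' (a := y - m) (b := 0)
        (by norm_num : (-1:ℝ) < -(1/2))).comp_sub_left y
      simpa using this
    have hcont : ContinuousOn (fun τ : ℝ => (1 + τ) ^ q) (Set.uIcc m y) := by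
      apply ContinuousOn.rpow_const
      · exact (continuous_const.add continuous_id).continuousOn
      · intro τ hτ
        rw [Set.uIcc_of_le hm2.le] at hτ
        exact Or.inl (ne_of_gt (show (0:ℝ) < 1 + τ by linarith [hτ.1]))
    exact hint.mul_continuousOn hcont
  exact part1.trans part2

noncomputable def Fk (μ : ℝ) (m k : ℕ) : ℝ :=
  if 2*k ≤ m then
    (-1)^k * 2^(m - 2*k) * Real.Gamma ((m:ℝ) - (k:ℝ) + μ) /
      ((k.factorial : ℝ) * ((m - 2*k).factorial : ℝ))
  else 0

noncomputable def gc (lam : ℝ) (n j : ℕ) : ℝ :=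
  (-1)^(n-j) * 2^j * Real.Gamma (lam + j) * Real.Gamma (2*lam + j + n) /
    (Real.Gamma lam * (j.factorial : ℝ) * Real.Gamma (2*lam + 2*j) * ((n-j).factorial : ℝ))

noncomputable def bet (lam : ℝ) (j : ℕ) : ℝ :=
  Real.Gamma (lam + j + 1/2) * Real.Gamma (1/2) / Real.Gamma (lam + j + 1)

noncomputable def Pp (lam : ℝ) (n : ℕ) (x : ℝ) : ℝ :=
  ∑ j ∈ Finset.range (n+1), (j:ℝ) * gc lam n j * bet lam j * (1+x)^j

lemma Fk_zero (μ : ℝ) {m k : ℕ} (h : m < 2*k) : Fk μ m k = 0 := by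
  rw [Fk, if_neg (by omega)]

lemma Fk_rec (μ : ℝ) (hμ : 0 < μ) (m k : ℕ) :
    ((m:ℝ)+2) * Fk μ (m+2) k =
      2*((m:ℝ)+1+μ) * Fk μ (m+1) k
        - ((m:ℝ)+2*μ) * (if k = 0 then 0 else Fk μ m (k-1)) := by
  rcases k with _ | K
  · rw [if_pos rfl, Fk, if_pos (by omega), Fk, if_pos (by omega)]
    rw [show ((m+2:ℕ):ℝ) - ((0:ℕ):ℝ) + μ = ((m:ℝ)+1+μ)+1 by push_cast; ring,
      Real.Gamma_add_one (by positivity),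
      show ((m+1:ℕ):ℝ) - ((0:ℕ):ℝ) + μ = (m:ℝ)+1+μ by push_cast; ring]
    have h1 : ((m+2).factorial : ℝ) = ((m:ℝ)+2) * ((m+1).factorial : ℝ) := by
      rw [show m+2 = (m+1)+1 by ring, Nat.factorial_succ]; push_cast; ring
    rw [show m+2-2*0 = m+2 by omega, show m+1-2*0 = m+1 by omega, h1,
      show ((2:ℝ))^(m+2) = 2*(2:ℝ)^(m+1) by rw [pow_succ]; ring]
    have h2 : ((m+1).factorial : ℝ) ≠ 0 := by positivity
    norm_num
    field_simp
  · rw [if_neg (Nat.succ_ne_zero K), Nat.succ_sub_one]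
    by_cases h1 : 2*(K+1) ≤ m+1
    · obtain ⟨a, ha⟩ := Nat.le.dest h1
      have hm : (m:ℝ) = 2*(K:ℝ)+1+(a:ℝ) := by
        have : ((2*(K+1)+a : ℕ) : ℝ) = ((m+1 : ℕ) : ℝ) := by rw [ha]
        push_cast at this; linarith
      rw [Fk, if_pos (by omega), Fk, if_pos (by omega), Fk, if_pos (by omega)]
      rw [show m+2-2*(K+1) = a+1 by omega, show m+1-2*(K+1) = a by omega,
        show m-2*K = a+1 by omega,
        show ((m+2:ℕ):ℝ) - ((K+1:ℕ):ℝ) + μ = ((K:ℝ)+(a:ℝ)+1+μ)+1 by push_cast; linarith,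
        Real.Gamma_add_one (by positivity),
        show ((m+1:ℕ):ℝ) - ((K+1:ℕ):ℝ) + μ = (K:ℝ)+(a:ℝ)+1+μ by push_cast; linarith,
        show ((m:ℕ):ℝ) - ((K:ℕ):ℝ) + μ = (K:ℝ)+(a:ℝ)+1+μ by push_cast; linarith]
      have e1 : ((K+1).factorial : ℝ) = ((K:ℝ)+1) * (K.factorial : ℝ) := by
        rw [Nat.factorial_succ]; push_cast; ring
      have e2 : ((a+1).factorial : ℝ) = ((a:ℝ)+1) * (a.factorial : ℝ) := by
        rw [Nat.factorial_succ]; push_cast; ring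
      have e3 : ((-1:ℝ))^(K+1) = -(-1:ℝ)^K := by rw [pow_succ]; ring
      have e4 : ((2:ℝ))^(a+1) = 2 * (2:ℝ)^a := by rw [pow_succ]; ring
      rw [e1, e2, e3, e4, hm]
      have n1 : (K.factorial : ℝ) ≠ 0 := by positivity
      have n2 : (a.factorial : ℝ) ≠ 0 := by positivity
      field_simp
      ring
    · by_cases h2 : 2*(K+1) ≤ m+2
      · have hm : m = 2*K := by omega
        subst hm
        rw [Fk, if_pos (by omega), Fk, if_neg (by omega), Fk, if_pos (by omega)]
        rw [show 2*K+2-2*(K+1) = 0 by omega, show 2*K-2*K = 0 by omega,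
          show ((2*K+2:ℕ):ℝ) - ((K+1:ℕ):ℝ) + μ = ((K:ℝ)+μ)+1 by push_cast; ring,
          Real.Gamma_add_one (by positivity),
          show ((2*K:ℕ):ℝ) - ((K:ℕ):ℝ) + μ = (K:ℝ)+μ by push_cast; ring]
        have e1 : ((K+1).factorial : ℝ) = ((K:ℝ)+1) * (K.factorial : ℝ) := by
          rw [Nat.factorial_succ]; push_cast; ring
        have e3 : ((-1:ℝ))^(K+1) = -(-1:ℝ)^K := by rw [pow_succ]; ring
        rw [e1, e3]
        have n1 : (K.factorial : ℝ) ≠ 0 := by positivity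
        push_cast
        field_simp
        ring
      · rw [Fk_zero μ (by omega), Fk_zero μ (by omega), Fk_zero μ (by omega)]
        ring

lemma S_sum (μ : ℝ) (hμ : 0 < μ) (m : ℕ) :
    ∑ k ∈ Finset.range (m+1), Fk μ m k =
      Real.Gamma μ * Real.Gamma (2*μ + m) / (Real.Gamma (2*μ) * (m.factorial : ℝ)) := by
  have h2μ : (0:ℝ) < 2*μ := by linarith
  have hG2 : Real.Gamma (2*μ) ≠ 0 := (Real.Gamma_pos_of_pos h2μ).ne'
  induction m using Nat.twoStepInduction with
  | zero =>
    rw [Finset.sum_range_one, Fk, if_pos (by omega)]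
    norm_num
    field_simp
  | one =>
    rw [Finset.sum_range_succ, Finset.sum_range_one, Fk, if_pos (by omega),
      Fk_zero μ (by omega),
      show (2*μ + ((1:ℕ):ℝ)) = (2*μ) + 1 by push_cast; ring,
      Real.Gamma_add_one h2μ.ne']
    norm_num
    rw [show (1:ℝ) + μ = μ + 1 by ring, Real.Gamma_add_one hμ.ne']
    field_simp
  | more m ihm ihm1 =>
    have key : ((m:ℝ)+2) * ∑ k ∈ Finset.range (m+2+1), Fk μ (m+2) k =
        2*((m:ℝ)+1+μ) * (∑ k ∈ Finset.range (m+1+1), Fk μ (m+1) k)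
          - ((m:ℝ)+2*μ) * (∑ k ∈ Finset.range (m+1), Fk μ m k) := by
      rw [Finset.mul_sum]
      have e1 : ∑ k ∈ Finset.range (m+2+1), ((m:ℝ)+2) * Fk μ (m+2) k =
          ∑ k ∈ Finset.range (m+2+1), (2*((m:ℝ)+1+μ) * Fk μ (m+1) k
            - ((m:ℝ)+2*μ) * (if k = 0 then 0 else Fk μ m (k-1))) :=
        Finset.sum_congr rfl fun k _ => Fk_rec μ hμ m k
      rw [e1, Finset.sum_sub_distrib, ← Finset.mul_sum, ← Finset.mul_sum]
      congr 1
      · congr 1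
        rw [Finset.sum_range_succ, Fk_zero μ (by omega), add_zero]
      · congr 1
        rw [Finset.sum_range_succ' (fun k => if k = 0 then (0:ℝ) else Fk μ m (k-1)) (m+2)]
        simp [Nat.succ_ne_zero]
        rw [Finset.sum_range_succ, Fk_zero μ (by omega), add_zero]
    rw [ihm, ihm1] at key
    have hm2 : ((m:ℝ)+2) ≠ 0 := by positivity
    have hfac : ∀ j : ℕ, ((j.factorial : ℝ)) ≠ 0 := fun j => by positivity
    push_cast at key ⊢
    have hg1 : Real.Gamma (2*μ + ((m:ℝ)+1)) = (2*μ + m) * Real.Gamma (2*μ + m) := by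
      rw [show (2*μ + ((m:ℝ)+1)) = (2*μ + (m:ℝ)) + 1 by ring,
        Real.Gamma_add_one (by positivity)]
    have hg2 : Real.Gamma (2*μ + ((m:ℝ)+2)) = (2*μ+m+1) * ((2*μ + m) * Real.Gamma (2*μ + m)) := by
      rw [show (2*μ + ((m:ℝ)+2)) = (2*μ + (m:ℝ) + 1) + 1 by ring,
        Real.Gamma_add_one (by positivity),
        show (2*μ + (m:ℝ) + 1) = (2*μ + (m:ℝ)) + 1 by ring,
        Real.Gamma_add_one (by positivity)]
    have hf1 : (((m+1).factorial : ℕ) : ℝ) = ((m:ℝ)+1) * (m.factorial : ℝ) := by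
      rw [Nat.factorial_succ]; push_cast; ring
    have hf2 : (((m+2).factorial : ℕ) : ℝ) = ((m:ℝ)+2) * (((m:ℝ)+1) * (m.factorial : ℝ)) := by
      rw [show m+2 = (m+1)+1 by ring, Nat.factorial_succ]
      push_cast
      rw [hf1]
      push_cast
      ring
    rw [hg1, hf1] at key
    rw [hg2, hf2]
    have goal' : ∑ k ∈ Finset.range (m+2+1), Fk μ (m+2) k =
        (2*((m:ℝ)+1+μ) * (Real.Gamma μ * ((2*μ+m) * Real.Gamma (2*μ+m)) /
          (Real.Gamma (2*μ) * (((m:ℝ)+1) * (m.factorial : ℝ))))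
          - ((m:ℝ)+2*μ) * (Real.Gamma μ * Real.Gamma (2*μ+m) /
            (Real.Gamma (2*μ) * (m.factorial : ℝ)))) / ((m:ℝ)+2) := by
      field_simp at key ⊢
      linarith [key]
    rw [goal']
    have hGm : Real.Gamma (2*μ + m) ≠ 0 := (Real.Gamma_pos_of_pos (by positivity)).ne'
    field_simp
    ring

lemma Fk_sum_ext (μ : ℝ) (m : ℕ) {A : ℕ} (hA : m/2 + 1 ≤ A) :
    ∑ k ∈ Finset.range A, Fk μ m k = ∑ k ∈ Finset.range (m+1), Fk μ m k := by
  have gen : ∀ B : ℕ, m/2 + 1 ≤ B →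
      ∑ k ∈ Finset.range B, Fk μ m k = ∑ k ∈ Finset.range (m/2+1), Fk μ m k := by
    intro B hB
    symm
    apply Finset.sum_subset (Finset.range_subset_range.mpr hB)
    intro k _ hk
    rw [Finset.mem_range, not_lt] at hk
    exact Fk_zero μ (by omega)
  rw [gen A hA, gen (m+1) (by omega)]

lemma exp_geg (lam : ℝ) (hlam : 0 < lam) (n : ℕ) (x : ℝ) :
    Gegenbauer lam n x = ∑ j ∈ Finset.range (n+1), gc lam n j * (1+x)^j := by
  rw [Gegenbauer]
  have stepA : ∀ p, p ≤ n → (2*x)^p =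
      ∑ j ∈ Finset.range (n+1), (2*(1+x))^j * (-2:ℝ)^(p-j) * ((p.choose j : ℕ) : ℝ) := by
    intro p hp
    rw [show (2*x) = (2*(1+x)) + (-2) by ring, add_pow]
    apply Finset.sum_subset (Finset.range_subset_range.mpr (by omega))
    intro j _ hj
    rw [Finset.mem_range, not_lt] at hj
    rw [Nat.choose_eq_zero_of_lt (by omega)]
    norm_num
  have stepB : ∑ k ∈ Finset.range (n/2 + 1),
      ((-1 : ℝ) ^ k * Real.Gamma ((n : ℝ) - (k : ℝ) + lam) /
        (Real.Gamma lam * (Nat.factorial k : ℝ) * (Nat.factorial (n - 2 * k) : ℝ))) *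
        (2 * x) ^ (n - 2 * k)
      = ∑ j ∈ Finset.range (n+1), ∑ k ∈ Finset.range (n/2+1),
          ((-1 : ℝ) ^ k * Real.Gamma ((n : ℝ) - (k : ℝ) + lam) /
            (Real.Gamma lam * (Nat.factorial k : ℝ) * (Nat.factorial (n - 2 * k) : ℝ))) *
          ((2*(1+x))^j * (-2:ℝ)^(n-2*k-j) * (((n-2*k).choose j : ℕ) : ℝ)) := by
    rw [Finset.sum_comm]
    apply Finset.sum_congr rfl
    intro k _
    rw [stepA (n-2*k) (by omega), Finset.mul_sum]
  rw [stepB]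
  apply Finset.sum_congr rfl
  intro j hj
  rw [Finset.mem_range] at hj
  have hjn : j ≤ n := by omega
  have stepC : ∀ k ∈ Finset.range (n/2+1),
      ((-1 : ℝ) ^ k * Real.Gamma ((n : ℝ) - (k : ℝ) + lam) /
        (Real.Gamma lam * (Nat.factorial k : ℝ) * (Nat.factorial (n - 2 * k) : ℝ))) *
        ((2*(1+x))^j * (-2:ℝ)^(n-2*k-j) * (((n-2*k).choose j : ℕ) : ℝ))
      = ((-1:ℝ)^(n-j) * 2^j * (1+x)^j / (Real.Gamma lam * (j.factorial : ℝ))) *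
          Fk (lam+j) (n-j) k := by
    intro k hk
    rw [Finset.mem_range] at hk
    have h2k : 2*k ≤ n := by omega
    by_cases h : j ≤ n - 2*k
    · rw [Fk, if_pos (by omega)]
      have hch : ((n-2*k).factorial : ℝ) =
          (((n-2*k).choose j : ℕ) : ℝ) * (j.factorial : ℝ) * ((n-2*k-j).factorial : ℝ) := by
        exact_mod_cast congrArg (Nat.cast (R := ℝ))
          (Nat.choose_mul_factorial_mul_factorial h).symm
      have hsgn : ((-2:ℝ))^(n-2*k-j) = (-1:ℝ)^(n-j) * 2^(n-2*k-j) := by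
        rw [show (-2:ℝ) = -1 * 2 by ring, mul_pow]
        congr 1
        rw [show n-j = (n-2*k-j) + 2*k by omega, pow_add, pow_mul]
        norm_num
      rw [hsgn, hch, mul_pow (2:ℝ) (1+x) j,
        show ((n-j:ℕ):ℝ) - (k:ℝ) + (lam + (j:ℝ)) = (n:ℝ) - (k:ℝ) + lam by
          push_cast [Nat.cast_sub hjn]; ring,
        show n - j - 2*k = n - 2*k - j by omega]
      have hne1 : Real.Gamma lam ≠ 0 := (Real.Gamma_pos_of_pos hlam).ne'
      have hne2 : (k.factorial : ℝ) ≠ 0 := by positivity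
      have hne3 : (j.factorial : ℝ) ≠ 0 := by positivity
      have hne4 : ((n-2*k-j).factorial : ℝ) ≠ 0 := by positivity
      have hne5 : (((n-2*k).choose j : ℕ) : ℝ) ≠ 0 := by
        exact_mod_cast Nat.cast_ne_zero.mpr (Nat.choose_pos h).ne'
      field_simp
    · rw [Nat.choose_eq_zero_of_lt (by omega), Fk_zero _ (by omega)]
      norm_num
  rw [Finset.sum_congr rfl stepC, ← Finset.mul_sum,
    Fk_sum_ext (lam+j) (n-j) (by omega), S_sum (lam+j) (by positivity),
    show (2*(lam + (j:ℝ))) = 2*lam + 2*(j:ℝ) by ring,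
    show (2*lam + 2*(j:ℝ) + ((n-j:ℕ):ℝ)) = 2*lam + (j:ℝ) + (n:ℝ) by
      push_cast [Nat.cast_sub hjn]; ring,
    gc]
  ring

lemma IDE (lam : ℝ) (hlam : 0 < lam) (n : ℕ) {y : ℝ} (hy : -1 < y) :
    (1 + y) ^ (-lam) *
      ∫ τ in (-1 : ℝ)..y, (y - τ) ^ (-(1 / 2) : ℝ) * (1 + τ) ^ (lam - 1 / 2) *
        Gegenbauer lam n τ
    = ∑ j ∈ Finset.range (n+1), gc lam n j * bet lam j * (1+y)^((j:ℝ)) := by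
  have h0y : (0:ℝ) < 1 + y := by linarith
  have hint : ∀ j : ℕ,
      IntervalIntegrable (fun τ => gc lam n j * ((y - τ) ^ (-(1/2) : ℝ) *
        (1 + τ) ^ (lam - 1/2 + j))) volume (-1) y :=
    fun j => (integrable_ker (by push_cast; linarith [Nat.cast_nonneg (α := ℝ) j]) hy).const_mul _
  have congr1 : ∫ τ in (-1 : ℝ)..y, (y - τ) ^ (-(1 / 2) : ℝ) * (1 + τ) ^ (lam - 1 / 2) *
        Gegenbauer lam n τ
      = ∫ τ in (-1 : ℝ)..y, ∑ j ∈ Finset.range (n+1),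
          gc lam n j * ((y - τ) ^ (-(1/2) : ℝ) * (1 + τ) ^ (lam - 1/2 + j)) := by
    rw [intervalIntegral.integral_of_le (by linarith), intervalIntegral.integral_of_le (by linarith)]
    apply MeasureTheory.setIntegral_congr_fun measurableSet_Ioc
    intro τ hτ
    have h0τ : (0:ℝ) < 1 + τ := by linarith [hτ.1]
    show (y - τ) ^ (-(1/2) : ℝ) * (1 + τ) ^ (lam - 1/2) * Gegenbauer lam n τ
      = ∑ j ∈ Finset.range (n+1), gc lam n j * ((y - τ) ^ (-(1/2) : ℝ) * (1 + τ) ^ (lam - 1/2 + (j:ℝ)))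
    rw [exp_geg lam hlam n τ, Finset.mul_sum]
    apply Finset.sum_congr rfl
    intro j _
    rw [Real.rpow_add h0τ, Real.rpow_natCast]
    ring
  rw [congr1, intervalIntegral.integral_finset_sum (fun j _ => hint j), Finset.mul_sum]
  apply Finset.sum_congr rfl
  intro j _
  rw [intervalIntegral.integral_const_mul,
    show (lam - 1/2 + (j:ℝ)) = (lam + j + 1/2) - 1 by ring,
    beta_int (by positivity) hy]
  rw [show (lam + (j:ℝ) + 1/2 - 1/2) = lam + j by ring]
  rw [show Real.Gamma (lam + (j:ℝ) + 1/2) * Real.Gamma (1/2) / Real.Gamma (lam + (j:ℝ) + 1/2 + 1/2)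
      = bet lam j by rw [bet, show lam + (j:ℝ) + 1/2 + 1/2 = lam + (j:ℝ) + 1 by ring]]
  rw [show (1+y) ^ (-lam) * (gc lam n j * (bet lam j * (1+y) ^ (lam + (j:ℝ)))) =
    gc lam n j * bet lam j * ((1+y) ^ (-lam) * (1+y) ^ (lam + (j:ℝ))) by ring,
    ← Real.rpow_add h0y, show -lam + (lam + (j:ℝ)) = (j:ℝ) by ring]

lemma Pp_neg_one (lam : ℝ) (n : ℕ) : Pp lam n (-1) = 0 := by
  rw [Pp]
  apply Finset.sum_eq_zero
  intro j _
  rcases j with _ | i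
  · norm_num
  · rw [show (1:ℝ) + -1 = 0 by ring, zero_pow (Nat.succ_ne_zero i)]
    ring

lemma DPLUS (lam : ℝ) (hlam : 0 < lam) (n : ℕ) {x : ℝ} (hx : x ∈ Set.Icc (-1:ℝ) 1) :
    Dplus lam (Gegenbauer lam n) x = Pp lam n x := by
  rcases eq_or_lt_of_le hx.1 with h | h
  · rw [Dplus, ← h, Pp_neg_one]
    norm_num
  · rw [Dplus]
    have hev : (fun y : ℝ => (1 + y) ^ (-lam) *
        ∫ τ in (-1 : ℝ)..y, (y - τ) ^ (-(1 / 2) : ℝ) * (1 + τ) ^ (lam - 1 / 2) *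
          Gegenbauer lam n τ)
        =ᶠ[nhds x] (fun y : ℝ => ∑ j ∈ Finset.range (n+1),
          gc lam n j * bet lam j * (1+y)^(j:ℕ)) := by
      filter_upwards [Ioi_mem_nhds h] with y hy
      rw [IDE lam hlam n hy]
      apply Finset.sum_congr rfl
      intro j _
      rw [Real.rpow_natCast]
    rw [hev.deriv_eq]
    have hder : HasDerivAt (fun y : ℝ => ∑ j ∈ Finset.range (n+1),
        gc lam n j * bet lam j * (1+y)^(j:ℕ))
        (∑ j ∈ Finset.range (n+1), gc lam n j * bet lam j * ((j:ℝ) * (1+x)^(j-1))) x := by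
      apply HasDerivAt.fun_sum
      intro j _
      have h1 : HasDerivAt (fun y : ℝ => (1+y)^(j:ℕ)) ((j:ℝ) * (1+x)^(j-1)) x := by
        have h0 : HasDerivAt (fun y : ℝ => 1+y) 1 x := (hasDerivAt_id x).const_add 1
        have := h0.fun_pow j
        simpa using this
      exact (h1.const_mul _)
    rw [hder.deriv, Pp, Finset.mul_sum]
    apply Finset.sum_congr rfl
    intro j _
    rcases j with _ | i
    · norm_num
    · rw [Nat.add_sub_cancel]
      have : (1+x) * (1+x)^i = (1+x)^(i+1) := by rw [pow_succ]; ring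
      calc (1 + x) * (gc lam n (i+1) * bet lam (i+1) * (((i+1:ℕ):ℝ) * (1+x)^i))
          = gc lam n (i+1) * bet lam (i+1) * (((i+1:ℕ):ℝ) * ((1+x) * (1+x)^i)) := by ring
        _ = ((i+1:ℕ):ℝ) * gc lam n (i+1) * bet lam (i+1) * (1+x)^(i+1) := by rw [this]; ring

lemma geg_parity (lam : ℝ) (n : ℕ) (x : ℝ) :
    Gegenbauer lam n (-x) = (-1:ℝ)^n * Gegenbauer lam n x := by
  rw [Gegenbauer, Gegenbauer, Finset.mul_sum]
  apply Finset.sum_congr rfl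
  intro k hk
  rw [Finset.mem_range] at hk
  have h2k : 2*k ≤ n := by omega
  rw [show (2 * -x) = -(2*x) by ring, neg_pow (2*x) (n - 2*k),
    show ((-1:ℝ))^(n - 2*k) = (-1:ℝ)^n by
      conv_rhs => rw [show n = (n - 2*k) + 2*k by omega]
      rw [pow_add, pow_mul]
      norm_num]
  ring

lemma dplus_const_mul (lam c : ℝ) (f : ℝ → ℝ) (x : ℝ) :
    Dplus lam (fun t => c * f t) x = c * Dplus lam f x := by
  rw [Dplus, Dplus]
  have key : (fun y : ℝ => (1 + y) ^ (-lam) *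
      ∫ τ in (-1 : ℝ)..y, (y - τ) ^ (-(1 / 2) : ℝ) * (1 + τ) ^ (lam - 1 / 2) * (c * f τ))
      = fun y : ℝ => c * ((1 + y) ^ (-lam) *
        ∫ τ in (-1 : ℝ)..y, (y - τ) ^ (-(1 / 2) : ℝ) * (1 + τ) ^ (lam - 1 / 2) * f τ) := by
    funext y
    rw [show ∫ τ in (-1:ℝ)..y, (y - τ) ^ (-(1 / 2) : ℝ) * (1 + τ) ^ (lam - 1 / 2) * (c * f τ)
        = ∫ τ in (-1:ℝ)..y, c * ((y - τ) ^ (-(1 / 2) : ℝ) * (1 + τ) ^ (lam - 1 / 2) * f τ) from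
      intervalIntegral.integral_congr (fun τ _ => by ring),
      intervalIntegral.integral_const_mul]
    ring
  rw [key, deriv_const_mul_field]
  ring

lemma dminus_eq (lam : ℝ) (f : ℝ → ℝ) (x : ℝ) :
    Dminus lam f x = -(Dplus lam (fun t => f (-t)) (-x)) := by
  rw [Dminus, Dplus]
  have key : (fun y : ℝ => (1 - y) ^ (-lam) *
      ∫ τ in y..(1:ℝ), (τ - y) ^ (-(1 / 2) : ℝ) * (1 - τ) ^ (lam - 1 / 2) * f τ)
      = fun y : ℝ => ((fun z : ℝ => (1 + z) ^ (-lam) *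
        ∫ τ in (-1:ℝ)..z, (z - τ) ^ (-(1 / 2) : ℝ) * (1 + τ) ^ (lam - 1 / 2) * f (-τ)) (-y)) := by
    funext y
    have hi := intervalIntegral.integral_comp_neg (a := (-1:ℝ)) (b := -y)
      (fun τ => (τ - y) ^ (-(1 / 2) : ℝ) * (1 - τ) ^ (lam - 1 / 2) * f τ)
    simp only [neg_neg] at hi
    rw [← hi]
    have : ∀ τ : ℝ, (-τ - y) ^ (-(1 / 2) : ℝ) * (1 - -τ) ^ (lam - 1 / 2) * f (-τ)
        = (-y - τ) ^ (-(1 / 2) : ℝ) * (1 + τ) ^ (lam - 1 / 2) * f (-τ) := by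
      intro τ
      rw [show -τ - y = -y - τ by ring, show 1 - -τ = 1 + τ by ring]
    simp_rw [this]
    rw [show (1:ℝ) - y = 1 + -y by ring]
  rw [key, deriv_comp_neg (f := fun z : ℝ => (1 + z) ^ (-lam) *
    ∫ τ in (-1:ℝ)..z, (z - τ) ^ (-(1 / 2) : ℝ) * (1 + τ) ^ (lam - 1 / 2) * f (-τ))]
  ring

lemma coeff_id (lam : ℝ) (hlam : 0 < lam) {n j : ℕ} (hj : j < n) :
    (j:ℝ) * gc lam n j * bet lam j =
      (Real.sqrt Real.pi * Real.Gamma (lam + 1/2) / Real.Gamma lam) / ((n:ℝ) + lam) *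
        (((n:ℝ) + 2*lam) * gc (lam + 1/2) (n-1) j + (n:ℝ) * gc (lam + 1/2) n j) := by
  obtain ⟨p, rfl⟩ : ∃ p, n = j + p + 1 := ⟨n - j - 1, by omega⟩
  rw [gc, gc, gc, bet]
  simp only [show j+p+1-j = p+1 from by omega, show j+p+1-1 = j+p from by omega,
    show j+p-j = p from by omega]
  rw [Real.Gamma_one_half_eq,
    show lam + (j:ℝ) + 1 = (lam + (j:ℝ)) + 1 by ring,
    Real.Gamma_add_one (by positivity),
    show 2*(lam+1/2) + 2*(j:ℝ) = (2*lam + 2*(j:ℝ)) + 1 by ring,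
    Real.Gamma_add_one (by positivity),
    show 2*(lam+1/2) + (j:ℝ) + ((j+p:ℕ):ℝ) = 2*lam + (j:ℝ) + ((j+p+1:ℕ):ℝ) by push_cast; ring,
    show 2*(lam+1/2) + (j:ℝ) + ((j+p+1:ℕ):ℝ) = (2*lam + (j:ℝ) + ((j+p+1:ℕ):ℝ)) + 1 by
      push_cast; ring,
    Real.Gamma_add_one (by positivity),
    show lam + 1/2 + (j:ℝ) = lam + (j:ℝ) + 1/2 by ring,
    Nat.factorial_succ (p)]
  have h1 : Real.Gamma lam ≠ 0 := (Real.Gamma_pos_of_pos hlam).ne'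
  have h2 : Real.Gamma (lam + 1/2) ≠ 0 := (Real.Gamma_pos_of_pos (by positivity)).ne'
  have h3 : Real.Gamma (lam + (j:ℝ)) ≠ 0 := (Real.Gamma_pos_of_pos (by positivity)).ne'
  have h4 : Real.Gamma (lam + (j:ℝ) + 1/2) ≠ 0 := (Real.Gamma_pos_of_pos (by positivity)).ne'
  have h5 : Real.Gamma (2*lam + 2*(j:ℝ)) ≠ 0 := (Real.Gamma_pos_of_pos (by positivity)).ne'
  have h6 : Real.Gamma (2*lam + (j:ℝ) + ((j+p+1:ℕ):ℝ)) ≠ 0 :=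
    (Real.Gamma_pos_of_pos (by positivity)).ne'
  have h7 : (j.factorial : ℝ) ≠ 0 := by positivity
  have h8 : (p.factorial : ℝ) ≠ 0 := by positivity
  have h9 : ((j+p+1:ℕ):ℝ) + lam ≠ 0 := by positivity
  have h10 : Real.sqrt Real.pi ≠ 0 := by positivity
  have h11 : (0:ℝ) < 2*lam + 2*(j:ℝ) := by positivity
  push_cast
  field_simp
  ring

lemma coeff_top (lam : ℝ) (hlam : 0 < lam) {n : ℕ} (hn : 1 ≤ n) :
    (n:ℝ) * gc lam n n * bet lam n =
      (Real.sqrt Real.pi * Real.Gamma (lam + 1/2) / Real.Gamma lam) / ((n:ℝ) + lam) *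
        ((n:ℝ) * gc (lam + 1/2) n n) := by
  rw [gc, gc, bet]
  simp only [Nat.sub_self]
  rw [Real.Gamma_one_half_eq,
    show lam + (n:ℝ) + 1 = (lam + (n:ℝ)) + 1 by ring,
    Real.Gamma_add_one (by positivity),
    show 2*(lam+1/2) + (n:ℝ) + (n:ℝ) = (2*lam + (n:ℝ) + (n:ℝ)) + 1 by ring,
    Real.Gamma_add_one (by positivity),
    show 2*(lam+1/2) + 2*(n:ℝ) = (2*lam + (n:ℝ) + (n:ℝ)) + 1 by ring,
    Real.Gamma_add_one (by positivity),
    show 2*lam + 2*(n:ℝ) = 2*lam + (n:ℝ) + (n:ℝ) by ring,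
    show lam + 1/2 + (n:ℝ) = lam + (n:ℝ) + 1/2 by ring]
  have h1 : Real.Gamma lam ≠ 0 := (Real.Gamma_pos_of_pos hlam).ne'
  have h2 : Real.Gamma (lam + 1/2) ≠ 0 := (Real.Gamma_pos_of_pos (by positivity)).ne'
  have h3 : Real.Gamma (lam + (n:ℝ)) ≠ 0 := (Real.Gamma_pos_of_pos (by positivity)).ne'
  have h4 : Real.Gamma (lam + (n:ℝ) + 1/2) ≠ 0 := (Real.Gamma_pos_of_pos (by positivity)).ne'
  have h5 : Real.Gamma (2*lam + (n:ℝ) + (n:ℝ)) ≠ 0 := (Real.Gamma_pos_of_pos (by positivity)).ne'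
  have h6 : (n.factorial : ℝ) ≠ 0 := by positivity
  have h9 : (n:ℝ) + lam ≠ 0 := by positivity
  have h10 : Real.sqrt Real.pi ≠ 0 := by positivity
  have h11 : (0:ℝ) < 2*lam + (n:ℝ) + (n:ℝ) := by positivity
  field_simp
  ring

lemma core (lam : ℝ) (hlam : 0 < lam) {n : ℕ} (hn : 1 ≤ n) (x : ℝ) :
    Pp lam n x =
      (Real.sqrt Real.pi * Real.Gamma (lam + 1/2) / Real.Gamma lam) / ((n:ℝ) + lam) *
        (((n:ℝ) + 2*lam) * Gegenbauer (lam + 1/2) (n-1) x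
          + (n:ℝ) * Gegenbauer (lam + 1/2) n x) := by
  set C := Real.sqrt Real.pi * Real.Gamma (lam + 1/2) / Real.Gamma lam with hC
  rw [Pp, exp_geg (lam + 1/2) (by positivity) (n-1) x, exp_geg (lam + 1/2) (by positivity) n x,
    show n - 1 + 1 = n from by omega,
    Finset.sum_range_succ, Finset.sum_range_succ (f := fun j => gc (lam + 1/2) n j * (1+x)^j)]
  have e1 : ∀ j ∈ Finset.range n, (j:ℝ) * gc lam n j * bet lam j * (1+x)^j
      = C / ((n:ℝ) + lam) * (((n:ℝ) + 2*lam) * (gc (lam + 1/2) (n-1) j * (1+x)^j))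
        + C / ((n:ℝ) + lam) * ((n:ℝ) * (gc (lam + 1/2) n j * (1+x)^j)) := by
    intro j hj
    rw [coeff_id lam hlam (Finset.mem_range.mp hj)]
    ring
  rw [Finset.sum_congr rfl e1, Finset.sum_add_distrib, ← Finset.mul_sum, ← Finset.mul_sum,
    ← Finset.mul_sum, ← Finset.mul_sum]
  have e2 : (n:ℝ) * gc lam n n * bet lam n * (1+x)^n
      = C / ((n:ℝ) + lam) * ((n:ℝ) * (gc (lam + 1/2) n n * (1+x)^n)) := by
    rw [show (n:ℝ) * gc lam n n * bet lam n * (1+x)^n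
      = ((n:ℝ) * gc lam n n * bet lam n) * (1+x)^n by ring, coeff_top lam hlam hn]
    ring
  rw [e2]
  ring

lemma Pp_zero (lam : ℝ) (x : ℝ) : Pp lam 0 x = 0 := by
  rw [Pp, Finset.sum_range_one]
  norm_num

/-- `𝓓^λ_+ C_n^λ = const · C_{n−1}^{λ+1/2}` (with `C_{−1}^{λ+1/2} = 0`) and
`𝓓^λ_− C_n^λ = const · C_n^{λ+1/2}`. -/
theorem stmt18 (lam : ℝ) (hlam : 0 < lam) (n : ℕ) (x : ℝ) (hx : x ∈ Set.Icc (-1 : ℝ) 1) :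
    calDplus lam (Gegenbauer lam n) x =
      (Real.sqrt Real.pi * Real.Gamma (lam + 1 / 2) / Real.Gamma lam) *
        (2 * ((n : ℝ) + 2 * lam) / ((n : ℝ) + lam)) *
        (if n = 0 then 0 else Gegenbauer (lam + 1 / 2) (n - 1) x) ∧
    calDminus lam (Gegenbauer lam n) x =
      (Real.sqrt Real.pi * Real.Gamma (lam + 1 / 2) / Real.Gamma lam) *
        (2 * (n : ℝ) / ((n : ℝ) + lam)) * Gegenbauer (lam + 1 / 2) n x := by
  have hnx : -x ∈ Set.Icc (-1:ℝ) 1 := ⟨by linarith [hx.2], by linarith [hx.1]⟩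
  have hDp := DPLUS lam hlam n hx
  have hDm : Dminus lam (Gegenbauer lam n) x = -((-1:ℝ)^n * Pp lam n (-x)) := by
    rw [dminus_eq]
    have hfn : (fun t => Gegenbauer lam n (-t))
        = fun t => (-1:ℝ)^n * Gegenbauer lam n t := funext (geg_parity lam n)
    rw [hfn, dplus_const_mul, DPLUS lam hlam n hnx]
  have hne : ((n:ℝ) + lam) ≠ 0 := by positivity
  rcases Nat.eq_zero_or_pos n with h0 | hpos
  · subst h0
    rw [calDplus, calDminus, hDp, hDm, Pp_zero, Pp_zero, if_pos rfl]
    norm_num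
  · have hc1 := core lam hlam hpos x
    have hc2 := core lam hlam hpos (-x)
    rw [geg_parity (lam + 1/2) (n-1) x, geg_parity (lam + 1/2) n x] at hc2
    constructor
    · rw [calDplus, hDp, hDm, hc1, hc2, if_neg (by omega)]
      rcases Nat.even_or_odd n with he | ho
      · rw [he.neg_one_pow, (Nat.Even.sub_odd hpos he odd_one).neg_one_pow]
        field_simp
        ring
      · rw [ho.neg_one_pow, (Nat.Odd.sub_odd ho odd_one).neg_one_pow]
        field_simp
        ring
    · rw [calDminus, hDp, hDm, hc1, hc2]
      rcases Nat.even_or_odd n with he | ho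
      · rw [he.neg_one_pow, (Nat.Even.sub_odd hpos he odd_one).neg_one_pow]
        field_simp
        ring
      · rw [ho.neg_one_pow, (Nat.Odd.sub_odd ho odd_one).neg_one_pow]
        field_simp
        ring
end
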